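/- arXiv:1504.04685 — 3 statements merged into one kernel-verified Lean document; each statement's English description precedes it below -/
import Mathlib

section
/- The map sending a standard Young tableau T with n boxes to its content vector (c(b_T(1)), c(b_T(2)), …, c(b_T(n))), where b_T(i) is the box of T containing the entry i and c(b) is the content of box b, is a bijection from the set of standard Young tableaux with n boxes to the set of content vectors of length n. -/
/-- A standard Young `I`-tableau with `n` boxes: a Young `I`-diagram (a function from `I` to
Young diagrams with `n` boxes in total) whose boxes are filled bijectively with `1,…,n`,
strictly increasing along each row and each column of every diagram.  Entries outside the
boxes are normalized to `0`. -/
structure StdYIT (I : Type*) [Fintype I] (n : ℕ) where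
  shape : I → YoungDiagram
  entry : I → ℕ × ℕ → ℕ
  total_card : ∑ i : I, (shape i).card = n
  zero_outside : ∀ i c, c ∉ (shape i).cells → entry i c = 0
  mem_range : ∀ i, ∀ c ∈ (shape i).cells, entry i c ∈ Finset.Icc 1 n
  unique_fill : ∀ m ∈ Finset.Icc 1 n,
    ∃! p : I × (ℕ × ℕ), p.2 ∈ (shape p.1).cells ∧ entry p.1 p.2 = m
  row_strict : ∀ i r c₁ c₂, c₁ < c₂ → (r, c₁) ∈ (shape i).cells → (r, c₂) ∈ (shape i).cells →
    entry i (r, c₁) < entry i (r, c₂)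
  col_strict : ∀ i r₁ r₂ c, r₁ < r₂ → (r₁, c) ∈ (shape i).cells → (r₂, c) ∈ (shape i).cells →
    entry i (r₁, c) < entry i (r₂, c)

/-- `(a₁,…,aₙ)` is a content vector: `a₁ = 0`; each later value is adjacent to an earlier one;
and between two occurrences of the same value both neighbouring values occur. -/
def IsContentVector {n : ℕ} (a : Fin n → ℤ) : Prop :=
  (∀ h : 0 < n, a ⟨0, h⟩ = 0) ∧
  (∀ i : Fin n, 0 < (i : ℕ) →
    ∃ j : Fin n, (j : ℕ) < (i : ℕ) ∧ (a j = a i - 1 ∨ a j = a i + 1)) ∧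
  (∀ i j : Fin n, (i : ℕ) < (j : ℕ) → a i = a j →
    (∃ k : Fin n, (i : ℕ) < (k : ℕ) ∧ (k : ℕ) < (j : ℕ) ∧ a k = a i - 1) ∧
    (∃ k : Fin n, (i : ℕ) < (k : ℕ) ∧ (k : ℕ) < (j : ℕ) ∧ a k = a i + 1))

/-- `a` is the content vector of the standard Young tableau `T`: for every box `c` of `T`, the
value of `a` at the (1-based) entry of that box is the content (column − row) of the box. -/
def ContentVecOf {n : ℕ} (T : StdYIT Unit n) (a : Fin n → ℤ) : Prop :=
  ∀ c ∈ (T.shape ()).cells, ∀ m : Fin n, (m : ℕ) + 1 = T.entry () c →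
    a m = (c.2 : ℤ) - (c.1 : ℤ)


namespace CVAux

variable {n : ℕ}

/-- number of occurrences of value `d` strictly before (nat) index `m`. -/
def C (a : Fin n → ℤ) (m : ℕ) (d : ℤ) : ℕ :=
  (Finset.univ.filter (fun j : Fin n => (j : ℕ) < m ∧ a j = d)).card

lemma mem_Cset {a : Fin n → ℤ} {m : ℕ} {d : ℤ} {j : Fin n} :
    j ∈ Finset.univ.filter (fun j : Fin n => (j : ℕ) < m ∧ a j = d) ↔ (j : ℕ) < m ∧ a j = d := by
  simp

lemma C_lt {a : Fin n → ℤ} {m m' : Fin n} {d : ℤ} (h : (m : ℕ) < (m' : ℕ)) (hd : a m = d) :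
    C a m d < C a m' d := by
  classical
  apply Finset.card_lt_card
  constructor
  · intro j hj
    rcases mem_Cset.mp hj with ⟨h1, h2⟩
    exact mem_Cset.mpr ⟨h1.trans h, h2⟩
  · intro hsub
    have := hsub (mem_Cset.mpr ⟨h, hd⟩)
    exact absurd (mem_Cset.mp this).1 (lt_irrefl _)

lemma exists_rank {a : Fin n → ℤ} (e : ℤ) :
    ∀ m : ℕ, ∀ t : ℕ, t < C a m e → ∃ j : Fin n, (j : ℕ) < m ∧ a j = e ∧ C a j e = t := by
  intro m
  induction m using Nat.strong_induction_on with
  | _ m IH =>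
    intro t ht
    classical
    set S := Finset.univ.filter (fun j : Fin n => (j : ℕ) < m ∧ a j = e) with hS
    have hne : S.Nonempty := Finset.card_pos.mp (Nat.lt_of_le_of_lt (Nat.zero_le t) ht)
    set j := S.max' hne with hj
    have hjmem : j ∈ S := S.max'_mem hne
    rcases mem_Cset.mp hjmem with ⟨hjm, hje⟩
    have hCj : C a j e = C a m e - 1 := by
      have : Finset.univ.filter (fun i : Fin n => (i : ℕ) < (j : ℕ) ∧ a i = e) = S.erase j := by
        ext i
        simp only [Finset.mem_erase, mem_Cset, hS, Finset.mem_filter, Finset.mem_univ, true_and]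
        constructor
        · rintro ⟨h1, h2⟩
          exact ⟨by exact fun hij => by simp [hij] at h1, ⟨h1.trans hjm, h2⟩⟩
        · rintro ⟨hne', h1, h2⟩
          refine ⟨?_, h2⟩
          have hle : (i : ℕ) ≤ (j : ℕ) := S.le_max' i (mem_Cset.mpr ⟨h1, h2⟩)
          have : (i : ℕ) ≠ (j : ℕ) := fun hv => hne' (Fin.ext hv)
          omega
      rw [C, this, Finset.card_erase_of_mem hjmem]
      rfl
    have hpos : 0 < C a m e := by omega
    by_cases htj : t = C a (j : ℕ) e
    · exact ⟨j, hjm, hje, htj.symm⟩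
    · have : t < C a (j : ℕ) e := by omega
      rcases IH (j : ℕ) hjm t this with ⟨j', hj'⟩
      exact ⟨j', hj'.1.trans hjm, hj'.2⟩


section
variable {a : Fin n → ℤ} (hA : IsContentVector a)
include hA

lemma exists_pred : ∀ N : ℕ, ∀ p : Fin n, (p : ℕ) ≤ N → ∀ e : ℤ, a p = e → 1 ≤ e →
    ∃ j : Fin n, (j : ℕ) ≤ (p : ℕ) ∧ a j = e - 1 := by
  intro N
  induction N with
  | zero =>
    intro p hp e he h1
    have h0 : 0 < n := p.pos
    have : p = ⟨0, h0⟩ := Fin.ext (by simp only [Fin.val_mk]; omega)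
    rw [this, hA.1 h0] at he
    omega
  | succ N IH =>
    intro p hp e he h1
    by_cases h0 : (p : ℕ) = 0
    · have hn : 0 < n := p.pos
      have : p = ⟨0, hn⟩ := Fin.ext h0
      rw [this, hA.1 hn] at he
      omega
    · rcases hA.2.1 p (by omega) with ⟨j, hj, hja⟩
      rcases hja with h | h
      · exact ⟨j, le_of_lt hj, by rw [h, he]⟩
      · rcases IH j (by omega) (e + 1) (by rw [h, he]) (by omega) with ⟨j', hj', hj'a⟩
        have hj'p : (j' : ℕ) < (p : ℕ) := by omega
        have : a j' = a p := by rw [hj'a, he]; ring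
        rcases (hA.2.2 j' p hj'p this).1 with ⟨k, hk1, hk2, hk3⟩
        exact ⟨k, le_of_lt hk2, by rw [hk3, hj'a]; ring⟩

lemma exists_succ : ∀ N : ℕ, ∀ p : Fin n, (p : ℕ) ≤ N → ∀ e : ℤ, a p = e → e ≤ -1 →
    ∃ j : Fin n, (j : ℕ) ≤ (p : ℕ) ∧ a j = e + 1 := by
  intro N
  induction N with
  | zero =>
    intro p hp e he h1
    have h0 : 0 < n := p.pos
    have : p = ⟨0, h0⟩ := Fin.ext (by simp only [Fin.val_mk]; omega)
    rw [this, hA.1 h0] at he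
    omega
  | succ N IH =>
    intro p hp e he h1
    by_cases h0 : (p : ℕ) = 0
    · have hn : 0 < n := p.pos
      have : p = ⟨0, hn⟩ := Fin.ext h0
      rw [this, hA.1 hn] at he
      omega
    · rcases hA.2.1 p (by omega) with ⟨j, hj, hja⟩
      rcases hja with h | h
      · rcases IH j (by omega) (e - 1) (by rw [h, he]) (by omega) with ⟨j', hj', hj'a⟩
        have hj'p : (j' : ℕ) < (p : ℕ) := by omega
        have : a j' = a p := by rw [hj'a, he]; ring
        rcases (hA.2.2 j' p hj'p this).2 with ⟨k, hk1, hk2, hk3⟩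
        exact ⟨k, le_of_lt hk2, by rw [hk3, hj'a]; ring⟩
      · exact ⟨j, le_of_lt hj, by rw [h, he]⟩


lemma gap_core (m : Fin n) (e : ℤ) (he : e = a m + 1 ∨ e = a m - 1) :
    ∀ p : Fin n, (p : ℕ) < (m : ℕ) → a p = a m →
    ∃ k : Fin n, (p : ℕ) < (k : ℕ) ∧ a k = e ∧
      ∀ q : Fin n, (p : ℕ) < (q : ℕ) → (q : ℕ) ≤ (m : ℕ) → a q = a m → (k : ℕ) < (q : ℕ) := by
  intro p hp hpa
  classical
  set Np := Finset.univ.filter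
    (fun q : Fin n => (p : ℕ) < (q : ℕ) ∧ (q : ℕ) ≤ (m : ℕ) ∧ a q = a m) with hNp
  have hne : Np.Nonempty := ⟨m, Finset.mem_filter.mpr ⟨Finset.mem_univ _, hp, le_rfl, rfl⟩⟩
  set q0 := Np.min' hne with hq0def
  have hq0 : q0 ∈ Np := Np.min'_mem hne
  simp only [hNp, Finset.mem_filter, Finset.mem_univ, true_and] at hq0
  obtain ⟨h1, h2, h3⟩ := hq0
  have hpq : a p = a q0 := by rw [hpa, h3]
  have hiii := hA.2.2 p q0 h1 hpq
  have hbound : ∀ q : Fin n, (p : ℕ) < (q : ℕ) → (q : ℕ) ≤ (m : ℕ) → a q = a m →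
      (q0 : ℕ) ≤ (q : ℕ) := by
    intro q hq1 hq2 hq3
    exact Np.min'_le q (Finset.mem_filter.mpr ⟨Finset.mem_univ _, hq1, hq2, hq3⟩)
  rcases he with rfl | rfl
  · rcases hiii.2 with ⟨k, hk1, hk2, hk3⟩
    exact ⟨k, hk1, by rw [hk3, hpa], fun q hq1 hq2 hq3 => lt_of_lt_of_le hk2 (hbound q hq1 hq2 hq3)⟩
  · rcases hiii.1 with ⟨k, hk1, hk2, hk3⟩
    exact ⟨k, hk1, by rw [hk3, hpa], fun q hq1 hq2 hq3 => lt_of_lt_of_le hk2 (hbound q hq1 hq2 hq3)⟩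

lemma gap_le (m : Fin n) (e : ℤ) (he : e = a m + 1 ∨ e = a m - 1) :
    C a (m : ℕ) (a m) ≤ C a (m : ℕ) e := by
  classical
  set f : Fin n → Fin n := fun p =>
    if h : (p : ℕ) < (m : ℕ) ∧ a p = a m then Classical.choose (gap_core hA m e he p h.1 h.2)
    else p with hf
  have hfspec : ∀ p : Fin n, (p : ℕ) < (m : ℕ) → a p = a m →
      (p : ℕ) < (f p : ℕ) ∧ a (f p) = e ∧
      ∀ q : Fin n, (p : ℕ) < (q : ℕ) → (q : ℕ) ≤ (m : ℕ) → a q = a m → (f p : ℕ) < (q : ℕ) := by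
    intro p h1 h2
    have : f p = Classical.choose (gap_core hA m e he p h1 h2) := by
      rw [hf]; exact dif_pos ⟨h1, h2⟩
    rw [this]
    exact Classical.choose_spec (gap_core hA m e he p h1 h2)
  apply Finset.card_le_card_of_injOn f
  · intro p hp
    rcases mem_Cset.mp hp with ⟨h1, h2⟩
    obtain ⟨g1, g2, g3⟩ := hfspec p h1 h2
    exact mem_Cset.mpr ⟨g3 m h1 le_rfl rfl, g2⟩
  · intro p1 hp1 p2 hp2 hfe
    rcases mem_Cset.mp (Finset.mem_coe.mp hp1) with ⟨h11, h12⟩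
    rcases mem_Cset.mp (Finset.mem_coe.mp hp2) with ⟨h21, h22⟩
    obtain ⟨g11, g12, g13⟩ := hfspec p1 h11 h12
    obtain ⟨g21, g22, g23⟩ := hfspec p2 h21 h22
    rcases lt_trichotomy (p1 : ℕ) (p2 : ℕ) with h | h | h
    · have := g13 p2 h (le_of_lt h21) h22
      have : (f p1 : ℕ) < (f p2 : ℕ) := lt_trans this g21
      rw [hfe] at this; omega
    · exact Fin.ext h
    · have := g23 p1 h (le_of_lt h11) h12
      have : (f p2 : ℕ) < (f p1 : ℕ) := lt_trans this g11
      rw [hfe] at this; omega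

lemma gap_lt (m : Fin n) (e : ℤ) (he : e = a m + 1 ∨ e = a m - 1) (j0 : Fin n)
    (hj0e : a j0 = e)
    (hj0 : ∀ q : Fin n, (q : ℕ) ≤ (m : ℕ) → a q = a m → (j0 : ℕ) < (q : ℕ)) :
    C a (m : ℕ) (a m) + 1 ≤ C a (m : ℕ) e := by
  classical
  set f : Fin n → Fin n := fun p =>
    if h : (p : ℕ) < (m : ℕ) ∧ a p = a m then Classical.choose (gap_core hA m e he p h.1 h.2)
    else p with hf
  have hfspec : ∀ p : Fin n, (p : ℕ) < (m : ℕ) → a p = a m →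
      (p : ℕ) < (f p : ℕ) ∧ a (f p) = e ∧
      ∀ q : Fin n, (p : ℕ) < (q : ℕ) → (q : ℕ) ≤ (m : ℕ) → a q = a m → (f p : ℕ) < (q : ℕ) := by
    intro p h1 h2
    have : f p = Classical.choose (gap_core hA m e he p h1 h2) := by
      rw [hf]; exact dif_pos ⟨h1, h2⟩
    rw [this]
    exact Classical.choose_spec (gap_core hA m e he p h1 h2)
  have hj0m : (j0 : ℕ) < (m : ℕ) := hj0 m le_rfl rfl
  have hj0mem : j0 ∈ Finset.univ.filter (fun j : Fin n => (j : ℕ) < (m : ℕ) ∧ a j = e) :=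
    mem_Cset.mpr ⟨hj0m, hj0e⟩
  have hcard : C a (m : ℕ) (a m) ≤
      ((Finset.univ.filter (fun j : Fin n => (j : ℕ) < (m : ℕ) ∧ a j = e)).erase j0).card := by
    apply Finset.card_le_card_of_injOn f
    · intro p hp
      rcases mem_Cset.mp hp with ⟨h1, h2⟩
      obtain ⟨g1, g2, g3⟩ := hfspec p h1 h2
      refine Finset.mem_erase.mpr ⟨?_, mem_Cset.mpr ⟨g3 m h1 le_rfl rfl, g2⟩⟩
      have : (j0 : ℕ) < (p : ℕ) := hj0 p (le_of_lt h1) h2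
      intro hcontra
      rw [hcontra] at g1
      omega
    · intro p1 hp1 p2 hp2 hfe
      rcases mem_Cset.mp (Finset.mem_coe.mp hp1) with ⟨h11, h12⟩
      rcases mem_Cset.mp (Finset.mem_coe.mp hp2) with ⟨h21, h22⟩
      obtain ⟨g11, g12, g13⟩ := hfspec p1 h11 h12
      obtain ⟨g21, g22, g23⟩ := hfspec p2 h21 h22
      rcases lt_trichotomy (p1 : ℕ) (p2 : ℕ) with h | h | h
      · have := g13 p2 h (le_of_lt h21) h22
        have : (f p1 : ℕ) < (f p2 : ℕ) := lt_trans this g21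
        rw [hfe] at this; omega
      · exact Fin.ext h
      · have := g23 p1 h (le_of_lt h11) h12
        have : (f p2 : ℕ) < (f p1 : ℕ) := lt_trans this g11
        rw [hfe] at this; omega
  have hpos : 0 < C a (m : ℕ) e := Finset.card_pos.mpr ⟨j0, hj0mem⟩
  have := Finset.card_erase_of_mem hj0mem
  unfold C at *
  omega

lemma gap_pos (m : Fin n) (h1 : 1 ≤ a m) :
    C a (m : ℕ) (a m) + 1 ≤ C a (m : ℕ) (a m - 1) := by
  classical
  set S' := Finset.univ.filter
    (fun q : Fin n => (q : ℕ) ≤ (m : ℕ) ∧ a q = a m) with hS'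
  have hne : S'.Nonempty := ⟨m, by simp [hS']⟩
  set p0 := S'.min' hne with hp0def
  have hp0 : p0 ∈ S' := S'.min'_mem hne
  simp only [hS', Finset.mem_filter, Finset.mem_univ, true_and] at hp0
  obtain ⟨hp0m, hp0a⟩ := hp0
  obtain ⟨j, hj1, hj2⟩ := exists_pred hA (p0 : ℕ) p0 le_rfl (a m) hp0a h1
  have hjne : (j : ℕ) ≠ (p0 : ℕ) := by
    intro hc
    have : j = p0 := Fin.ext hc
    rw [this, hp0a] at hj2
    omega
  apply gap_lt hA m (a m - 1) (Or.inr rfl) j hj2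
  intro q hq1 hq2
  have : (p0 : ℕ) ≤ (q : ℕ) := S'.min'_le q (Finset.mem_filter.mpr ⟨Finset.mem_univ _, hq1, hq2⟩)
  omega

lemma gap_neg (m : Fin n) (h1 : a m ≤ -1) :
    C a (m : ℕ) (a m) + 1 ≤ C a (m : ℕ) (a m + 1) := by
  classical
  set S' := Finset.univ.filter
    (fun q : Fin n => (q : ℕ) ≤ (m : ℕ) ∧ a q = a m) with hS'
  have hne : S'.Nonempty := ⟨m, by simp [hS']⟩
  set p0 := S'.min' hne with hp0def
  have hp0 : p0 ∈ S' := S'.min'_mem hne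
  simp only [hS', Finset.mem_filter, Finset.mem_univ, true_and] at hp0
  obtain ⟨hp0m, hp0a⟩ := hp0
  obtain ⟨j, hj1, hj2⟩ := exists_succ hA (p0 : ℕ) p0 le_rfl (a m) hp0a h1
  have hjne : (j : ℕ) ≠ (p0 : ℕ) := by
    intro hc
    have : j = p0 := Fin.ext hc
    rw [this, hp0a] at hj2
    omega
  apply gap_lt hA m (a m + 1) (Or.inl rfl) j hj2
  intro q hq1 hq2
  have : (p0 : ℕ) ≤ (q : ℕ) := S'.min'_le q (Finset.mem_filter.mpr ⟨Finset.mem_univ _, hq1, hq2⟩)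
  omega

end

def cellOf (a : Fin n → ℤ) (m : Fin n) : ℕ × ℕ :=
  (C a (m : ℕ) (a m) + (-(a m)).toNat, C a (m : ℕ) (a m) + (a m).toNat)

lemma content_cellOf (a : Fin n → ℤ) (m : Fin n) :
    ((cellOf a m).2 : ℤ) - ((cellOf a m).1 : ℤ) = a m := by
  simp only [cellOf]
  push_cast
  omega

lemma cellOf_injective (a : Fin n → ℤ) : Function.Injective (cellOf a) := by
  intro m1 m2 h
  have e1 := content_cellOf a m1
  have e2 := content_cellOf a m2
  rw [h] at e1
  have hc : a m1 = a m2 := e1.symm.trans e2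
  have h1 := congrArg Prod.fst h
  simp only [cellOf, hc] at h1
  have hCeq : C a (m1 : ℕ) (a m2) = C a (m2 : ℕ) (a m2) := by omega
  by_contra hne
  have hvne : (m1 : ℕ) ≠ (m2 : ℕ) := fun hv => hne (Fin.ext hv)
  rcases Nat.lt_or_ge (m1 : ℕ) (m2 : ℕ) with hlt | hge
  · have := C_lt (a := a) hlt hc
    omega
  · have hlt : (m2 : ℕ) < (m1 : ℕ) := by omega
    have := C_lt (a := a) hlt rfl
    rw [← hc] at hCeq
    have hc2 : C a (m2 : ℕ) (a m2) = C a (m2 : ℕ) (a m1) := by rw [hc]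
    omega

section
variable {a : Fin n → ℤ} (hA : IsContentVector a)
include hA

lemma up_nbr (m : Fin n) (r : ℕ) (hr : (cellOf a m).1 = r + 1) :
    ∃ j : Fin n, (j : ℕ) < (m : ℕ) ∧ cellOf a j = (r, (cellOf a m).2) := by
  have hr' : C a (m : ℕ) (a m) + (-(a m)).toNat = r + 1 := hr
  by_cases hd : 0 ≤ a m
  · have hk : C a (m : ℕ) (a m) ≤ C a (m : ℕ) (a m + 1) := gap_le hA m (a m + 1) (Or.inl rfl)
    have hkpos : 1 ≤ C a (m : ℕ) (a m) := by omega
    obtain ⟨j, hj1, hj2, hj3⟩ := exists_rank (a := a) (a m + 1) (m : ℕ)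
      (C a (m : ℕ) (a m) - 1) (by omega)
    refine ⟨j, hj1, ?_⟩
    have : cellOf a j = (C a (j : ℕ) (a m + 1) + (-(a m + 1)).toNat,
        C a (j : ℕ) (a m + 1) + (a m + 1).toNat) := by
      simp only [cellOf, hj2]
    rw [this]
    simp only [cellOf, Prod.mk.injEq]
    constructor <;> omega
  · have hk : C a (m : ℕ) (a m) + 1 ≤ C a (m : ℕ) (a m + 1) := gap_neg hA m (by omega)
    obtain ⟨j, hj1, hj2, hj3⟩ := exists_rank (a := a) (a m + 1) (m : ℕ)
      (C a (m : ℕ) (a m)) (by omega)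
    refine ⟨j, hj1, ?_⟩
    have : cellOf a j = (C a (j : ℕ) (a m + 1) + (-(a m + 1)).toNat,
        C a (j : ℕ) (a m + 1) + (a m + 1).toNat) := by
      simp only [cellOf, hj2]
    rw [this]
    simp only [cellOf, Prod.mk.injEq]
    constructor <;> omega

lemma left_nbr (m : Fin n) (c : ℕ) (hc : (cellOf a m).2 = c + 1) :
    ∃ j : Fin n, (j : ℕ) < (m : ℕ) ∧ cellOf a j = ((cellOf a m).1, c) := by
  have hc' : C a (m : ℕ) (a m) + (a m).toNat = c + 1 := hc
  by_cases hd : a m ≤ 0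
  · have hk : C a (m : ℕ) (a m) ≤ C a (m : ℕ) (a m - 1) := gap_le hA m (a m - 1) (Or.inr rfl)
    have hkpos : 1 ≤ C a (m : ℕ) (a m) := by omega
    obtain ⟨j, hj1, hj2, hj3⟩ := exists_rank (a := a) (a m - 1) (m : ℕ)
      (C a (m : ℕ) (a m) - 1) (by omega)
    refine ⟨j, hj1, ?_⟩
    have : cellOf a j = (C a (j : ℕ) (a m - 1) + (-(a m - 1)).toNat,
        C a (j : ℕ) (a m - 1) + (a m - 1).toNat) := by
      simp only [cellOf, hj2]
    rw [this]
    simp only [cellOf, Prod.mk.injEq]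
    constructor <;> omega
  · have hk : C a (m : ℕ) (a m) + 1 ≤ C a (m : ℕ) (a m - 1) := gap_pos hA m (by omega)
    obtain ⟨j, hj1, hj2, hj3⟩ := exists_rank (a := a) (a m - 1) (m : ℕ)
      (C a (m : ℕ) (a m)) (by omega)
    refine ⟨j, hj1, ?_⟩
    have : cellOf a j = (C a (j : ℕ) (a m - 1) + (-(a m - 1)).toNat,
        C a (j : ℕ) (a m - 1) + (a m - 1).toNat) := by
      simp only [cellOf, hj2]
    rw [this]
    simp only [cellOf, Prod.mk.injEq]
    constructor <;> omega

lemma lower_closed :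
    ∀ M : ℕ, ∀ m : Fin n, (m : ℕ) < M → ∀ r' c', r' ≤ (cellOf a m).1 → c' ≤ (cellOf a m).2 →
      ∃ j : Fin n, cellOf a j = (r', c') := by
  intro M
  induction M with
  | zero => intro m h; omega
  | succ M IH =>
    intro m hm r' c' h1 h2
    rcases Nat.lt_or_ge r' (cellOf a m).1 with h | h
    · obtain ⟨r, hr⟩ : ∃ r, (cellOf a m).1 = r + 1 := ⟨(cellOf a m).1 - 1, by omega⟩
      obtain ⟨j, hjm, hj⟩ := up_nbr hA m r hr
      exact IH j (by omega) r' c' (by rw [hj]; omega) (by rw [hj]; exact h2)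
    · rcases Nat.lt_or_ge c' (cellOf a m).2 with h' | h'
      · obtain ⟨c, hc⟩ : ∃ c, (cellOf a m).2 = c + 1 := ⟨(cellOf a m).2 - 1, by omega⟩
        obtain ⟨j, hjm, hj⟩ := left_nbr hA m c hc
        exact IH j (by omega) r' c' (by rw [hj]; omega) (by rw [hj]; omega)
      · refine ⟨m, ?_⟩
        have : r' = (cellOf a m).1 ∧ c' = (cellOf a m).2 := by omega
        rw [this.1, this.2]

lemma row_chain :
    ∀ M : ℕ, ∀ m : Fin n, (m : ℕ) < M → ∀ c', c' < (cellOf a m).2 →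
      ∃ j : Fin n, (j : ℕ) < (m : ℕ) ∧ cellOf a j = ((cellOf a m).1, c') := by
  intro M
  induction M with
  | zero => intro m h; omega
  | succ M IH =>
    intro m hm c' h2
    obtain ⟨c, hc⟩ : ∃ c, (cellOf a m).2 = c + 1 := ⟨(cellOf a m).2 - 1, by omega⟩
    obtain ⟨j, hjm, hj⟩ := left_nbr hA m c hc
    rcases Nat.lt_or_ge c' c with h | h
    · obtain ⟨j', hj'm, hj'⟩ := IH j (by omega) c' (by rw [hj]; omega)
      refine ⟨j', by omega, ?_⟩
      rw [hj'] at *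
      rw [hj]
    · have : c' = c := by omega
      exact ⟨j, hjm, by rw [hj, this]⟩

lemma col_chain :
    ∀ M : ℕ, ∀ m : Fin n, (m : ℕ) < M → ∀ r', r' < (cellOf a m).1 →
      ∃ j : Fin n, (j : ℕ) < (m : ℕ) ∧ cellOf a j = (r', (cellOf a m).2) := by
  intro M
  induction M with
  | zero => intro m h; omega
  | succ M IH =>
    intro m hm r' h2
    obtain ⟨r, hr⟩ : ∃ r, (cellOf a m).1 = r + 1 := ⟨(cellOf a m).1 - 1, by omega⟩
    obtain ⟨j, hjm, hj⟩ := up_nbr hA m r hr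
    rcases Nat.lt_or_ge r' r with h | h
    · obtain ⟨j', hj'm, hj'⟩ := IH j (by omega) r' (by rw [hj]; omega)
      refine ⟨j', by omega, ?_⟩
      rw [hj'] at *
      rw [hj]
    · have : r' = r := by omega
      exact ⟨j, hjm, by rw [hj, this]⟩

end

noncomputable def entOf (a : Fin n → ℤ) (c : ℕ × ℕ) : ℕ :=
  if h : ∃ m : Fin n, cellOf a m = c then ((Classical.choose h : Fin n) : ℕ) + 1 else 0

lemma entOf_cellOf (a : Fin n → ℤ) (m : Fin n) : entOf a (cellOf a m) = (m : ℕ) + 1 := by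
  have hex : ∃ m' : Fin n, cellOf a m' = cellOf a m := ⟨m, rfl⟩
  rw [entOf, dif_pos hex]
  have := Classical.choose_spec hex
  rw [cellOf_injective a this]

section
variable {a : Fin n → ℤ} (hA : IsContentVector a)

noncomputable def shapeOf : YoungDiagram where
  cells := Finset.image (cellOf a) Finset.univ
  isLowerSet := by
    intro x y hle hx
    simp only [Finset.coe_image, Finset.coe_univ, Set.image_univ, Set.mem_range] at hx ⊢
    obtain ⟨m, hm⟩ := hx
    obtain ⟨j, hj⟩ := lower_closed hA ((m : ℕ) + 1) m (Nat.lt_succ_self _) y.1 y.2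
      (by rw [hm]; exact hle.1) (by rw [hm]; exact hle.2)
    exact ⟨j, by rw [hj]⟩

lemma mem_shapeOf {c : ℕ × ℕ} : c ∈ (shapeOf hA).cells ↔ ∃ m : Fin n, cellOf a m = c := by
  simp [shapeOf]

noncomputable def TA : StdYIT Unit n where
  shape := fun _ => shapeOf hA
  entry := fun _ c => entOf a c
  total_card := by
    simp only [Finset.univ_unique, Finset.sum_singleton]
    show (Finset.image (cellOf a) Finset.univ).card = n
    rw [Finset.card_image_of_injective _ (cellOf_injective a), Finset.card_univ,
      Fintype.card_fin]
  zero_outside := by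
    intro i c hc
    show entOf a c = 0
    rw [entOf, dif_neg]
    intro hex
    exact hc ((mem_shapeOf hA).mpr hex)
  mem_range := by
    intro i c hc
    obtain ⟨m, hm⟩ := (mem_shapeOf hA).mp hc
    show entOf a c ∈ Finset.Icc 1 n
    rw [← hm, entOf_cellOf]
    simp only [Finset.mem_Icc]
    exact ⟨by omega, by have := m.isLt; omega⟩
  unique_fill := by
    intro m hm
    simp only [Finset.mem_Icc] at hm
    set m' : Fin n := ⟨m - 1, by omega⟩ with hm'
    refine ⟨((), cellOf a m'), ⟨(mem_shapeOf hA).mpr ⟨m', rfl⟩, by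
      show entOf a (cellOf a m') = m
      rw [entOf_cellOf]; simp [hm']; omega⟩, ?_⟩
    rintro ⟨u, c⟩ ⟨hc1, hc2⟩
    obtain ⟨j, hj⟩ := (mem_shapeOf hA).mp hc1
    have hj' : cellOf a j = c := hj
    have : entOf a c = m := hc2
    rw [← hj', entOf_cellOf] at this
    have : j = m' := Fin.ext (by simp [hm']; omega)
    simp only [Prod.mk.injEq]
    exact ⟨trivial, by rw [← hj', this]⟩
  row_strict := by
    intro i r c₁ c₂ hlt h1 h2
    obtain ⟨m2, hm2⟩ := (mem_shapeOf hA).mp h2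
    obtain ⟨m1, hm1⟩ := (mem_shapeOf hA).mp h1
    obtain ⟨j, hjm, hj⟩ := row_chain hA ((m2 : ℕ) + 1) m2 (Nat.lt_succ_self _) c₁
      (by rw [hm2]; exact hlt)
    rw [hm2] at hj
    have hjeq : j = m1 := cellOf_injective a (by rw [hj, hm1])
    show entOf a (r, c₁) < entOf a (r, c₂)
    rw [← hm1, ← hm2, entOf_cellOf, entOf_cellOf]
    rw [hjeq] at hjm
    omega
  col_strict := by
    intro i r₁ r₂ c hlt h1 h2
    obtain ⟨m2, hm2⟩ := (mem_shapeOf hA).mp h2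
    obtain ⟨m1, hm1⟩ := (mem_shapeOf hA).mp h1
    obtain ⟨j, hjm, hj⟩ := col_chain hA ((m2 : ℕ) + 1) m2 (Nat.lt_succ_self _) r₁
      (by rw [hm2]; exact hlt)
    rw [hm2] at hj
    have hjeq : j = m1 := cellOf_injective a (by rw [hj, hm1])
    show entOf a (r₁, c) < entOf a (r₂, c)
    rw [← hm1, ← hm2, entOf_cellOf, entOf_cellOf]
    rw [hjeq] at hjm
    omega

lemma contentVecOf_TA : ContentVecOf (TA hA) a := by
  intro c hc m hme
  obtain ⟨m', hm'⟩ := (mem_shapeOf hA).mp hc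
  have : (TA hA).entry () c = entOf a c := rfl
  rw [this, ← hm', entOf_cellOf] at hme
  have : m = m' := Fin.ext (by omega)
  rw [this, ← hm', content_cellOf]

end

section
variable (T : StdYIT Unit n)

lemma mem_Icc_succ (m : Fin n) : (m : ℕ) + 1 ∈ Finset.Icc 1 n := by
  simp only [Finset.mem_Icc]
  exact ⟨by omega, m.isLt⟩

noncomputable def box (m : Fin n) : ℕ × ℕ :=
  (T.unique_fill ((m : ℕ) + 1) (mem_Icc_succ m)).choose.2

lemma box_mem (m : Fin n) : box T m ∈ (T.shape ()).cells :=
  (T.unique_fill ((m : ℕ) + 1) (mem_Icc_succ m)).choose_spec.1.1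

lemma entry_box (m : Fin n) : T.entry () (box T m) = (m : ℕ) + 1 :=
  (T.unique_fill ((m : ℕ) + 1) (mem_Icc_succ m)).choose_spec.1.2

lemma box_unique (m : Fin n) {c : ℕ × ℕ} (hc : c ∈ (T.shape ()).cells)
    (he : T.entry () c = (m : ℕ) + 1) : c = box T m :=
  congrArg Prod.snd ((T.unique_fill ((m : ℕ) + 1) (mem_Icc_succ m)).choose_spec.2
    ((), c) ⟨hc, he⟩)

lemma box_injective {m1 m2 : Fin n} (h : box T m1 = box T m2) : m1 = m2 := by
  have h1 := entry_box T m1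
  have h2 := entry_box T m2
  rw [h] at h1
  exact Fin.ext (by omega)

def dcell (d : ℤ) (s : ℕ) : ℕ × ℕ := (s + (-d).toNat, s + d.toNat)

lemma dcell_mem (d : ℤ) {s s' : ℕ} (h : s ≤ s') (hmem : dcell d s' ∈ (T.shape ()).cells) :
    dcell d s ∈ (T.shape ()).cells := by
  have := (T.shape ()).isLowerSet (a := dcell d s') (b := dcell d s)
    ⟨by simp [dcell]; omega, by simp [dcell]; omega⟩
  simpa using this (by simpa using hmem)

lemma entry_dcell_lt (d : ℤ) (s : ℕ) (h : dcell d (s + 1) ∈ (T.shape ()).cells) :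
    T.entry () (dcell d s) < T.entry () (dcell d (s + 1)) := by
  set mid : ℕ × ℕ := (s + (-d).toNat, s + 1 + d.toNat) with hmid
  have hmidmem : mid ∈ (T.shape ()).cells := by
    have := (T.shape ()).isLowerSet (a := dcell d (s + 1)) (b := mid)
      ⟨by simp [dcell, hmid], by simp [dcell, hmid]⟩
    simpa using this (by simpa using h)
  have h0 : dcell d s ∈ (T.shape ()).cells := dcell_mem T d (Nat.le_succ s) h
  have h1 := T.row_strict () (s + (-d).toNat) (s + d.toNat) (s + 1 + d.toNat)
    (by omega) h0 hmidmem
  have h2 := T.col_strict () (s + (-d).toNat) (s + 1 + (-d).toNat) (s + 1 + d.toNat)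
    (by omega) hmidmem h
  exact lt_trans h1 h2

lemma entry_dcell_mono (d : ℤ) :
    ∀ s' s : ℕ, s ≤ s' → dcell d s' ∈ (T.shape ()).cells →
      T.entry () (dcell d s) ≤ T.entry () (dcell d s') := by
  intro s'
  induction s' with
  | zero =>
    intro s hs _
    have : s = 0 := by omega
    rw [this]
  | succ s' IH =>
    intro s hs hmem
    by_cases h : s = s' + 1
    · rw [h]
    · have hs' : s ≤ s' := by omega
      have hmem' : dcell d s' ∈ (T.shape ()).cells := dcell_mem T d (Nat.le_succ s') hmem
      exact le_trans (IH s hs' hmem') (le_of_lt (entry_dcell_lt T d s' hmem))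

lemma entry_dcell_strict (d : ℤ) {s s' : ℕ} (h : s < s')
    (hmem : dcell d s' ∈ (T.shape ()).cells) :
    T.entry () (dcell d s) < T.entry () (dcell d s') := by
  obtain ⟨s'', rfl⟩ : ∃ s'', s' = s'' + 1 := ⟨s' - 1, by omega⟩
  have hmem' : dcell d s'' ∈ (T.shape ()).cells := dcell_mem T d (Nat.le_succ s'') hmem
  exact lt_of_le_of_lt (entry_dcell_mono T d s'' s (by omega) hmem') (entry_dcell_lt T d s'' hmem)

variable {a : Fin n → ℤ} (hCV : ContentVecOf T a)
include hCV

lemma box_content (m : Fin n) : a m = ((box T m).2 : ℤ) - ((box T m).1 : ℤ) :=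
  hCV (box T m) (box_mem T m) m (entry_box T m).symm

lemma box_eq_dcell (m : Fin n) :
    box T m = dcell (a m) (min (box T m).1 (box T m).2) := by
  have h := box_content T hCV m
  have h1 : (box T m).1 = min (box T m).1 (box T m).2 + (-(a m)).toNat := by omega
  have h2 : (box T m).2 = min (box T m).1 (box T m).2 + (a m).toNat := by omega
  exact Prod.ext h1 h2

lemma depth_eq (m : Fin n) : min (box T m).1 (box T m).2 = C a (m : ℕ) (a m) := by
  classical
  set t := min (box T m).1 (box T m).2 with ht
  have hboxd : box T m = dcell (a m) t := box_eq_dcell T hCV m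
  have hn : 0 < n := m.pos
  apply le_antisymm
  · -- t ≤ C a m (a m)
    have hcard : (Finset.range t).card ≤ C a (m : ℕ) (a m) := by
      set f : ℕ → Fin n := fun s =>
        if h : s < t then
          ⟨T.entry () (dcell (a m) s) - 1, by
            have hm1 : dcell (a m) s ∈ (T.shape ()).cells :=
              dcell_mem T (a m) (le_of_lt h) (hboxd ▸ box_mem T m)
            have := T.mem_range () _ hm1
            simp only [Finset.mem_Icc] at this
            omega⟩
        else ⟨0, hn⟩
      have hfs : ∀ s, s < t → (f s : ℕ) = T.entry () (dcell (a m) s) - 1 := by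
        intro s h
        simp only [f, dif_pos h]
      have hent : ∀ s, s < t → 1 ≤ T.entry () (dcell (a m) s) ∧
          T.entry () (dcell (a m) s) < (m : ℕ) + 1 := by
        intro s h
        have hm1 : dcell (a m) s ∈ (T.shape ()).cells :=
          dcell_mem T (a m) (le_of_lt h) (hboxd ▸ box_mem T m)
        have h1 := T.mem_range () _ hm1
        simp only [Finset.mem_Icc] at h1
        have h2 := entry_dcell_strict T (a m) h (hboxd ▸ box_mem T m)
        rw [← hboxd, entry_box] at h2
        exact ⟨h1.1, h2⟩
      apply Finset.card_le_card_of_injOn f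
      · intro s hs
        rw [Finset.mem_coe, Finset.mem_range] at hs
        have hm1 : dcell (a m) s ∈ (T.shape ()).cells :=
          dcell_mem T (a m) (le_of_lt hs) (hboxd ▸ box_mem T m)
        obtain ⟨he1, he2⟩ := hent s hs
        have hval := hfs s hs
        apply mem_Cset.mpr
        constructor
        · omega
        · have := hCV (dcell (a m) s) hm1 (f s) (by omega)
          rw [this]
          simp only [dcell]
          push_cast
          omega
      · intro s1 hs1 s2 hs2 hfe
        simp only [Finset.coe_range, Set.mem_Iio] at hs1 hs2
        rcases lt_trichotomy s1 s2 with h | h | h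
        · have := entry_dcell_strict T (a m) h
            (dcell_mem T (a m) (le_of_lt hs2) (hboxd ▸ box_mem T m))
          have hv1 := hfs s1 hs1
          have hv2 := hfs s2 hs2
          obtain ⟨g1, _⟩ := hent s1 hs1
          obtain ⟨g2, _⟩ := hent s2 hs2
          have : (f s1 : ℕ) = (f s2 : ℕ) := by rw [hfe]
          omega
        · exact h
        · have := entry_dcell_strict T (a m) h
            (dcell_mem T (a m) (le_of_lt hs1) (hboxd ▸ box_mem T m))
          have hv1 := hfs s1 hs1
          have hv2 := hfs s2 hs2
          obtain ⟨g1, _⟩ := hent s1 hs1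
          obtain ⟨g2, _⟩ := hent s2 hs2
          have : (f s1 : ℕ) = (f s2 : ℕ) := by rw [hfe]
          omega
    rwa [Finset.card_range] at hcard
  · -- C a m (a m) ≤ t
    have hcard : C a (m : ℕ) (a m) ≤ (Finset.range t).card := by
      set g : Fin n → ℕ := fun j => min (box T j).1 (box T j).2 with hg
      apply Finset.card_le_card_of_injOn g
      · intro j hj
        rcases mem_Cset.mp hj with ⟨hjm, hja⟩
        rw [Finset.mem_coe, Finset.mem_range]
        have hbj : box T j = dcell (a m) (g j) := by
          rw [← hja]
          exact box_eq_dcell T hCV j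
        by_contra hcon
        have hge : t ≤ g j := by omega
        have := entry_dcell_mono T (a m) (g j) t hge (hbj ▸ box_mem T j)
        rw [← hboxd, ← hbj, entry_box, entry_box] at this
        omega
      · intro j1 hj1 j2 hj2 hge
        rcases mem_Cset.mp (Finset.mem_coe.mp hj1) with ⟨hm1, ha1⟩
        rcases mem_Cset.mp (Finset.mem_coe.mp hj2) with ⟨hm2, ha2⟩
        have hb1 : box T j1 = dcell (a m) (g j1) := by
          rw [← ha1]; exact box_eq_dcell T hCV j1
        have hb2 : box T j2 = dcell (a m) (g j2) := by
          rw [← ha2]; exact box_eq_dcell T hCV j2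
        apply box_injective T
        rw [hb1, hb2, hge]
    rwa [Finset.card_range] at hcard

lemma box_eq_cellOf (m : Fin n) : box T m = cellOf a m := by
  rw [box_eq_dcell T hCV m, depth_eq T hCV m]
  rfl

end

lemma StdYIT_ext {T T' : StdYIT Unit n} (hs : T.shape = T'.shape)
    (he : T.entry = T'.entry) : T = T' := by
  cases T
  cases T'
  simp only at hs he
  subst hs
  subst he
  rfl

lemma T_unique {a : Fin n → ℤ} (hA : IsContentVector a) (T : StdYIT Unit n)
    (hCV : ContentVecOf T a) : T = TA hA := by
  have hcells : (T.shape ()).cells = (shapeOf hA).cells := by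
    ext c
    constructor
    · intro hc
      have he := T.mem_range () c hc
      simp only [Finset.mem_Icc] at he
      set m : Fin n := ⟨T.entry () c - 1, by omega⟩ with hmdef
      have hbox : c = box T m := box_unique T m hc (by simp [hmdef]; omega)
      rw [hbox, box_eq_cellOf T hCV m]
      exact (mem_shapeOf hA).mpr ⟨m, rfl⟩
    · intro hc
      obtain ⟨m, hm⟩ := (mem_shapeOf hA).mp hc
      rw [← hm, ← box_eq_cellOf T hCV m]
      exact box_mem T m
  have hshape : T.shape = (TA hA).shape := by
    funext i
    show T.shape i = shapeOf hA
    have : T.shape i = T.shape () := rfl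
    rw [this]
    exact YoungDiagram.ext hcells
  refine StdYIT_ext hshape ?_
  funext i c
  show T.entry i c = entOf a c
  have hTi : T.entry i c = T.entry () c := rfl
  rw [hTi]
  by_cases hc : c ∈ (T.shape ()).cells
  · have he := T.mem_range () c hc
    simp only [Finset.mem_Icc] at he
    set m : Fin n := ⟨T.entry () c - 1, by omega⟩ with hmdef
    have hbox : c = box T m := box_unique T m hc (by simp [hmdef]; omega)
    rw [hbox, box_eq_cellOf T hCV m, entOf_cellOf]
    have := entry_box T m
    rw [box_eq_cellOf T hCV m] at this
    exact this
  · rw [T.zero_outside () c hc, entOf, dif_neg]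
    intro ⟨m, hm⟩
    rw [← hm, ← box_eq_cellOf T hCV m] at hc
    exact hc (box_mem T m)

section
variable (T : StdYIT Unit n)

noncomputable def cvOf : Fin n → ℤ := fun m => ((box T m).2 : ℤ) - ((box T m).1 : ℤ)

lemma contentVecOf_cvOf : ContentVecOf T (cvOf T) := by
  intro c hc m hme
  have : c = box T m := box_unique T m hc hme.symm
  rw [this]
  rfl

lemma up_entry {r c : ℕ} (h : (r + 1, c) ∈ (T.shape ()).cells) :
    (r, c) ∈ (T.shape ()).cells ∧ 1 ≤ T.entry () (r, c) ∧
      T.entry () (r, c) < T.entry () (r + 1, c) := by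
  have hmem : (r, c) ∈ (T.shape ()).cells := by
    have := (T.shape ()).isLowerSet (a := (r + 1, c)) (b := (r, c)) ⟨by simp, le_refl _⟩
    simpa using this (by simpa using h)
  have hr := T.mem_range () _ hmem
  simp only [Finset.mem_Icc] at hr
  exact ⟨hmem, hr.1, T.col_strict () r (r + 1) c (Nat.lt_succ_self r) hmem h⟩

lemma left_entry {r c : ℕ} (h : (r, c + 1) ∈ (T.shape ()).cells) :
    (r, c) ∈ (T.shape ()).cells ∧ 1 ≤ T.entry () (r, c) ∧
      T.entry () (r, c) < T.entry () (r, c + 1) := by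
  have hmem : (r, c) ∈ (T.shape ()).cells := by
    have := (T.shape ()).isLowerSet (a := (r, c + 1)) (b := (r, c)) ⟨le_refl _, by simp⟩
    simpa using this (by simpa using h)
  have hr := T.mem_range () _ hmem
  simp only [Finset.mem_Icc] at hr
  exact ⟨hmem, hr.1, T.row_strict () r c (c + 1) (Nat.lt_succ_self c) hmem h⟩

lemma box_zero (h : 0 < n) : box T ⟨0, h⟩ = (0, 0) := by
  have he : T.entry () (box T ⟨0, h⟩) = 1 := entry_box T ⟨0, h⟩
  have hmem := box_mem T ⟨0, h⟩
  set b := box T ⟨0, h⟩ with hb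
  have hbeq : b = (b.1, b.2) := rfl
  have h1 : b.1 = 0 := by
    by_contra hcon
    obtain ⟨r, hr⟩ : ∃ r, b.1 = r + 1 := ⟨b.1 - 1, by omega⟩
    have : (r + 1, b.2) ∈ (T.shape ()).cells := by rw [← hr, ← hbeq]; exact hmem
    obtain ⟨_, hge, hlt⟩ := up_entry T this
    rw [← hr, ← hbeq, he] at hlt
    omega
  have h2 : b.2 = 0 := by
    by_contra hcon
    obtain ⟨c, hc⟩ : ∃ c, b.2 = c + 1 := ⟨b.2 - 1, by omega⟩
    have : (b.1, c + 1) ∈ (T.shape ()).cells := by rw [← hc, ← hbeq]; exact hmem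
    obtain ⟨_, hge, hlt⟩ := left_entry T this
    rw [← hc, ← hbeq, he] at hlt
    omega
  rw [hbeq, h1, h2]

lemma isCV_cvOf : IsContentVector (cvOf T) := by
  refine ⟨?_, ?_, ?_⟩
  · intro h
    show ((box T ⟨0, h⟩).2 : ℤ) - ((box T ⟨0, h⟩).1 : ℤ) = 0
    rw [box_zero T h]
    simp
  · intro i hi
    have hmem := box_mem T i
    have he := entry_box T i
    set b := box T i with hb
    have hbeq : b = (b.1, b.2) := rfl
    by_cases h1 : b.1 = 0
    · -- b.2 ≠ 0, use left neighbour
      have h2 : b.2 ≠ 0 := by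
        intro h2
        have hb00 : box T i = (0, 0) := by rw [← hb, hbeq, h1, h2]
        have : box T i = box T ⟨0, i.pos⟩ := by rw [hb00, box_zero T i.pos]
        have := box_injective T this
        rw [this] at hi
        simp at hi
      obtain ⟨c, hc⟩ : ∃ c, b.2 = c + 1 := ⟨b.2 - 1, by omega⟩
      have hmem' : (b.1, c + 1) ∈ (T.shape ()).cells := by rw [← hc, ← hbeq]; exact hmem
      obtain ⟨hm', hge, hlt⟩ := left_entry T hmem'
      rw [← hc, ← hbeq, he] at hlt
      have hle := T.mem_range () _ hm'
      simp only [Finset.mem_Icc] at hle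
      set j : Fin n := ⟨T.entry () (b.1, c) - 1, by omega⟩ with hjdef
      have hbox : (b.1, c) = box T j := box_unique T j hm' (by simp [hjdef]; omega)
      refine ⟨j, by simp [hjdef]; omega, Or.inl ?_⟩
      show ((box T j).2 : ℤ) - ((box T j).1 : ℤ) = ((box T i).2 : ℤ) - ((box T i).1 : ℤ) - 1
      rw [← hbox, ← hb]
      simp only
      omega
    · obtain ⟨r, hr⟩ : ∃ r, b.1 = r + 1 := ⟨b.1 - 1, by omega⟩
      have hmem' : (r + 1, b.2) ∈ (T.shape ()).cells := by rw [← hr, ← hbeq]; exact hmem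
      obtain ⟨hm', hge, hlt⟩ := up_entry T hmem'
      rw [← hr, ← hbeq, he] at hlt
      have hle := T.mem_range () _ hm'
      simp only [Finset.mem_Icc] at hle
      set j : Fin n := ⟨T.entry () (r, b.2) - 1, by omega⟩ with hjdef
      have hbox : (r, b.2) = box T j := box_unique T j hm' (by simp [hjdef]; omega)
      refine ⟨j, by simp [hjdef]; omega, Or.inr ?_⟩
      show ((box T j).2 : ℤ) - ((box T j).1 : ℤ) = ((box T i).2 : ℤ) - ((box T i).1 : ℤ) + 1
      rw [← hbox, ← hb]
      simp only
      omega
  · intro i j hij hval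
    set d := cvOf T i with hd
    have hbi : box T i = dcell d (min (box T i).1 (box T i).2) :=
      box_eq_dcell T (contentVecOf_cvOf T) i
    have hbj : box T j = dcell d (min (box T j).1 (box T j).2) := by
      have := box_eq_dcell T (contentVecOf_cvOf T) j
      rw [← hval] at this
      exact this
    set si := min (box T i).1 (box T i).2 with hsi
    set sj := min (box T j).1 (box T j).2 with hsj
    have hslt : si < sj := by
      by_contra hcon
      have : sj ≤ si := by omega
      have := entry_dcell_mono T d si sj this (hbi ▸ box_mem T i)
      rw [← hbi, ← hbj, entry_box, entry_box] at this
      omega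
    have hBmem : dcell d (si + 1) ∈ (T.shape ()).cells :=
      dcell_mem T d (by omega) (hbj ▸ box_mem T j)
    have heB : T.entry () (dcell d (si + 1)) ≤ (j : ℕ) + 1 := by
      have := entry_dcell_mono T d sj (si + 1) (by omega) (hbj ▸ box_mem T j)
      rw [← hbj, entry_box] at this
      exact this
    -- upper neighbour of dcell d (si+1): content d + 1
    have humem : (si + (-d).toNat, si + 1 + d.toNat) ∈ (T.shape ()).cells := by
      have := (T.shape ()).isLowerSet (a := dcell d (si + 1))
        (b := (si + (-d).toNat, si + 1 + d.toNat)) ⟨by simp [dcell], by simp [dcell]⟩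
      simpa using this (by simpa using hBmem)
    have hvmem : (si + 1 + (-d).toNat, si + d.toNat) ∈ (T.shape ()).cells := by
      have := (T.shape ()).isLowerSet (a := dcell d (si + 1))
        (b := (si + 1 + (-d).toNat, si + d.toNat)) ⟨by simp [dcell], by simp [dcell]⟩
      simpa using this (by simpa using hBmem)
    have hilow : T.entry () (dcell d si) = (i : ℕ) + 1 := by rw [← hbi, entry_box]
    have hu1 : (i : ℕ) + 1 < T.entry () (si + (-d).toNat, si + 1 + d.toNat) := by
      have := T.row_strict () (si + (-d).toNat) (si + d.toNat) (si + 1 + d.toNat)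
        (by omega) (show dcell d si ∈ (T.shape ()).cells from hbi ▸ box_mem T i) humem
      rw [show ((si + (-d).toNat, si + d.toNat) : ℕ × ℕ) = dcell d si from rfl, hilow] at this
      exact this
    have hu2 : T.entry () (si + (-d).toNat, si + 1 + d.toNat) <
        T.entry () (dcell d (si + 1)) := by
      have := T.col_strict () (si + (-d).toNat) (si + 1 + (-d).toNat) (si + 1 + d.toNat)
        (by omega) humem hBmem
      exact this
    have hv1 : (i : ℕ) + 1 < T.entry () (si + 1 + (-d).toNat, si + d.toNat) := by
      have := T.col_strict () (si + (-d).toNat) (si + 1 + (-d).toNat) (si + d.toNat)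
        (by omega) (show dcell d si ∈ (T.shape ()).cells from hbi ▸ box_mem T i) hvmem
      rw [show ((si + (-d).toNat, si + d.toNat) : ℕ × ℕ) = dcell d si from rfl, hilow] at this
      exact this
    have hv2 : T.entry () (si + 1 + (-d).toNat, si + d.toNat) <
        T.entry () (dcell d (si + 1)) := by
      have := T.row_strict () (si + 1 + (-d).toNat) (si + d.toNat) (si + 1 + d.toNat)
        (by omega) hvmem hBmem
      exact this
    have huR := T.mem_range () _ humem
    have hvR := T.mem_range () _ hvmem
    simp only [Finset.mem_Icc] at huR hvR
    constructor
    · -- value d - 1 via v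
      set k : Fin n := ⟨T.entry () (si + 1 + (-d).toNat, si + d.toNat) - 1, by omega⟩ with hk
      have hbox : (si + 1 + (-d).toNat, si + d.toNat) = box T k :=
        box_unique T k hvmem (by simp [hk]; omega)
      refine ⟨k, by simp [hk]; omega, by simp [hk]; omega, ?_⟩
      show ((box T k).2 : ℤ) - ((box T k).1 : ℤ) = cvOf T i - 1
      rw [← hbox]
      have hdval : ((dcell d si).2 : ℤ) - ((dcell d si).1 : ℤ) = cvOf T i := by
        rw [← hbi]; rfl
      simp only [dcell] at hdval
      push_cast at hdval ⊢
      omega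
    · set k : Fin n := ⟨T.entry () (si + (-d).toNat, si + 1 + d.toNat) - 1, by omega⟩ with hk
      have hbox : (si + (-d).toNat, si + 1 + d.toNat) = box T k :=
        box_unique T k humem (by simp [hk]; omega)
      refine ⟨k, by simp [hk]; omega, by simp [hk]; omega, ?_⟩
      show ((box T k).2 : ℤ) - ((box T k).1 : ℤ) = cvOf T i + 1
      rw [← hbox]
      have hdval : ((dcell d si).2 : ℤ) - ((dcell d si).1 : ℤ) = cvOf T i := by
        rw [← hbi]; rfl
      simp only [dcell] at hdval
      push_cast at hdval ⊢
      omega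

end

end CVAux

/-- Sending a standard Young tableau with `n` boxes to its content vector is
a bijection onto the set of content vectors of length `n`. -/
theorem content_vector_bijection (n : ℕ) :
    (∀ T : StdYIT Unit n, ∃! a : Fin n → ℤ, IsContentVector a ∧ ContentVecOf T a) ∧
    (∀ a : Fin n → ℤ, IsContentVector a → ∃! T : StdYIT Unit n, ContentVecOf T a) := by
  constructor
  · intro T
    refine ⟨CVAux.cvOf T, ⟨CVAux.isCV_cvOf T, CVAux.contentVecOf_cvOf T⟩, ?_⟩
    rintro a' ⟨hA', hCV'⟩
    funext m
    have h1 := CVAux.box_content T hCV' m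
    have h2 := CVAux.box_content T (CVAux.contentVecOf_cvOf T) m
    rw [h1, ← h2]
  · intro a hA
    exact ⟨CVAux.TA hA, CVAux.contentVecOf_TA hA, fun T' hT' => CVAux.T_unique hA T' hT'⟩
end

section
/- For every 0 ≤ i ≤ n, the permutation representation of the symmetric group S_n on the complex vector space with basis the i-element subsets of {1,…,n} is multiplicity free, and the number of irreducible constituents in its decomposition equals min(i, n−i) + 1. -/
/-- A module is multiplicity free if any two isomorphic simple submodules coincide
(for semisimple modules this says every irreducible occurs at most once). -/
def IsMultiplicityFree (R : Type*) [Ring R] (V : Type*) [AddCommGroup V] [Module R V] : Prop :=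
  ∀ S T : Submodule R V, IsSimpleModule R S → IsSimpleModule R T →
    Nonempty (S ≃ₗ[R] T) → S = T

/-- The set of `i`-element subsets of `{1,…,n}`. -/
def JohnsonSet (n i : ℕ) : Type := {s : Finset (Fin n) // s.card = i}

instance (n i : ℕ) : MulAction (Equiv.Perm (Fin n)) (JohnsonSet n i) where
  smul π s := ⟨s.1.image π, by rw [Finset.card_image_of_injective _ π.injective, s.2]⟩
  one_smul s := Subtype.ext (by
    show s.1.image ⇑(1 : Equiv.Perm (Fin n)) = s.1
    simp)
  mul_smul π σ s := Subtype.ext (by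
    show s.1.image ⇑(π * σ) = (s.1.image ⇑σ).image ⇑π
    rw [Finset.image_image]; rfl)

/-- The permutation representation of `Sₙ` on the complex vector space with basis the
`i`-element subsets of `{1,…,n}`, as a module over the group algebra. -/
noncomputable def JohnsonModule (n i : ℕ) : Type :=
  (Representation.ofMulAction ℂ (Equiv.Perm (Fin n)) (JohnsonSet n i)).asModule

noncomputable instance (n i : ℕ) : AddCommGroup (JohnsonModule n i) :=
  inferInstanceAs (AddCommGroup (Representation.ofMulAction ℂ (Equiv.Perm (Fin n)) (JohnsonSet n i)).asModule)

noncomputable instance (n i : ℕ) :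
    Module (MonoidAlgebra ℂ (Equiv.Perm (Fin n))) (JohnsonModule n i) :=
  inferInstanceAs (Module (MonoidAlgebra ℂ (Equiv.Perm (Fin n)))
    (Representation.ofMulAction ℂ (Equiv.Perm (Fin n)) (JohnsonSet n i)).asModule)


set_option linter.unusedSectionVars false

section Abstract

variable {R : Type*} [Ring R] {V : Type*} [AddCommGroup V] [Module R V]

theorem multFree_of_comm [IsSemisimpleModule R V]
    (hcomm : ∀ f g : V →ₗ[R] V, f ∘ₗ g = g ∘ₗ f) : IsMultiplicityFree R V := by
  intro S T hS hT ⟨φ⟩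
  by_contra hne
  -- S and T are atoms, so S ⊓ T = ⊥
  have hSa : IsAtom S := (isSimpleModule_iff_isAtom).1 hS
  have hTa : IsAtom T := (isSimpleModule_iff_isAtom).1 hT
  have hdisj : Disjoint S T := hSa.disjoint_of_ne hTa hne
  -- complement q of S ⊔ T
  obtain ⟨q, hq⟩ := exists_isCompl (S ⊔ T)
  have hK : IsCompl S (T ⊔ q) :=
    ⟨hdisj.disjoint_sup_right_of_disjoint_sup_left hq.disjoint,
     by rw [codisjoint_iff, ← sup_assoc, hq.codisjoint.eq_top]⟩
  set π := S.projectionOnto (T ⊔ q) hK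
  set p : V →ₗ[R] V := S.subtype ∘ₗ π
  set f : V →ₗ[R] V := T.subtype ∘ₗ (φ : S →ₗ[R] T) ∘ₗ π
  have h1 : p ∘ₗ f = 0 := by
    ext v
    simp only [LinearMap.comp_apply, LinearMap.zero_apply, p, f]
    have hz : π (T.subtype ((φ : S →ₗ[R] T) (π v))) = 0 := by
      rw [Submodule.projectionOnto_apply_eq_zero_iff hK]
      exact Submodule.mem_sup_left ((φ : S →ₗ[R] T) (π v)).2
    rw [hz]
    simp
  have : Nontrivial S := IsSimpleModule.nontrivial R S
  obtain ⟨s, hs⟩ := exists_ne (0 : S)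
  have hps : π (s : V) = s := Submodule.projectionOnto_apply_left hK s
  have h2 : (f ∘ₗ p) (s : V) ≠ 0 := by
    simp only [LinearMap.comp_apply, p, f, hps, Submodule.coe_subtype, hps]
    simp only [LinearEquiv.coe_coe, Submodule.coe_eq_zero, ne_eq, LinearEquiv.map_eq_zero_iff]
    exact hs
  rw [← hcomm p f, h1] at h2
  exact h2 rfl

end Abstract

section Abstract2

variable {R : Type*} [Ring R] [Algebra ℂ R] {V : Type*} [AddCommGroup V] [Module ℂ V]
  [Module R V] [IsScalarTower ℂ R V] [SMulCommClass ℂ R V] [FiniteDimensional ℂ V]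

/-- Every simple submodule is invariant under every `R`-endomorphism, in a
multiplicity free module. -/
theorem inv_of_multFree (hmf : IsMultiplicityFree R V) (f : V →ₗ[R] V)
    (W : Submodule R V) (hW : IsSimpleModule R W) : ∀ x ∈ W, f x ∈ W := by
  intro x hx
  rcases (f.domRestrict W).injective_or_eq_zero with hinj | hzero
  · have hrange : LinearMap.range (f.domRestrict W) = W.map f := by
      simp [LinearMap.range_domRestrict]
    have e : W ≃ₗ[R] LinearMap.range (f.domRestrict W) :=
      LinearEquiv.ofInjective _ hinj
    rw [hrange] at e
    have hsimple : IsSimpleModule R (W.map f) := IsSimpleModule.congr e.symm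
    have heq : W = W.map f := hmf W (W.map f) hW hsimple ⟨e⟩
    rw [heq]
    exact Submodule.mem_map_of_mem hx
  · have : f.domRestrict W ⟨x, hx⟩ = 0 := by rw [hzero]; rfl
    rw [LinearMap.domRestrict_apply] at this
    rw [this]
    exact W.zero_mem

/-- Schur's lemma over ℂ: an `R`-endomorphism of a simple submodule is a scalar. -/
theorem exists_scalar_of_simple (W : Submodule R V) (hW : IsSimpleModule R W)
    (φ : W →ₗ[R] W) : ∃ c : ℂ, ∀ x : W, φ x = c • x := by
  haveI : SMulCommClass ℂ R W :=
    ⟨fun c r w => Subtype.ext (smul_comm c r (w : V))⟩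
  haveI : FiniteDimensional ℂ W :=
    FiniteDimensional.of_injective ((W.subtype).restrictScalars ℂ) (Submodule.injective_subtype W)
  haveI : Nontrivial W := IsSimpleModule.nontrivial R W
  obtain ⟨c, hc⟩ := Module.End.exists_eigenvalue (φ.restrictScalars ℂ)
  obtain ⟨v, hv⟩ := hc.exists_hasEigenvector
  refine ⟨c, ?_⟩
  set ψ : W →ₗ[R] W := φ - c • LinearMap.id with hψ
  have hker : ψ v = 0 := by
    have := hv.apply_eq_smul
    simp only [LinearMap.restrictScalars_apply] at this
    simp [hψ, this]
  rcases ψ.injective_or_eq_zero with hinj | hzero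
  · exact absurd (hinj (by simpa using hker)) hv.right
  · intro x
    have : ψ x = 0 := by rw [hzero]; rfl
    simpa [hψ, sub_eq_zero] using this

end Abstract2

section Abstract3

variable {R : Type*} [Ring R] [Algebra ℂ R] {V : Type*} [AddCommGroup V] [Module ℂ V]
  [Module R V] [IsScalarTower ℂ R V] [SMulCommClass ℂ R V] [FiniteDimensional ℂ V]

theorem exists_decomp (hmf : IsMultiplicityFree R V) [IsSemisimpleModule R V]
    {m : ℕ} (e : (V →ₗ[R] V) ≃ₗ[ℂ] (Fin m → ℂ)) :
    ∃ W : Fin m → Submodule R V, iSupIndep W ∧ (⨆ k, W k) = ⊤ ∧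
      (∀ k, IsSimpleModule R (W k)) ∧
      Pairwise fun k l => IsEmpty ((W k) ≃ₗ[R] (W l)) := by
  obtain ⟨s, hind, hsup, hsimp⟩ := IsSemisimpleModule.exists_sSupIndep_sSup_simples_eq_top R V
  have hcompl : ∀ W ∈ s, IsCompl W (sSup (s \ {W})) := by
    intro W hW
    refine ⟨hind hW, codisjoint_iff.2 (top_unique ?_)⟩
    rw [← hsup]
    refine sSup_le fun b hb => ?_
    rcases eq_or_ne b W with rfl | hne
    · exact le_sup_left
    · have hmem : b ∈ s \ {W} := Set.mem_diff_singleton.2 ⟨hb, hne⟩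
      exact le_trans (le_sSup hmem) le_sup_right
  set π : s → (V →ₗ[R] V) := fun W =>
    (W : Submodule R V).subtype ∘ₗ
      Submodule.projectionOnto _ _ (hcompl W W.2) with hπ
  have hπ1 : ∀ (W : s) (x : V) (hx : x ∈ (W : Submodule R V)), π W x = x := by
    intro W x hx
    simp only [hπ, LinearMap.comp_apply]
    rw [Submodule.projectionOnto_apply_left (hcompl W W.2) ⟨x, hx⟩]
    rfl
  have hπ2 : ∀ (W W' : s), W' ≠ W → ∀ x ∈ (W' : Submodule R V), π W x = 0 := by
    intro W W' hne x hx
    simp only [hπ, LinearMap.comp_apply]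
    have hmem : (W' : Submodule R V) ∈ s \ {(W : Submodule R V)} :=
      Set.mem_diff_singleton.2 ⟨W'.2, fun h => hne (Subtype.ext h)⟩
    have hle : (W' : Submodule R V) ≤ sSup (s \ {(W : Submodule R V)}) := le_sSup hmem
    rw [Submodule.projectionOnto_apply_of_mem_right (hcompl W W.2) (hle hx)]
    simp
  -- nontriviality of each member
  have hnt : ∀ W : s, ∃ x : V, x ∈ (W : Submodule R V) ∧ x ≠ 0 := by
    intro W
    haveI : IsSimpleModule R (W : Submodule R V) := hsimp _ W.2
    haveI : Nontrivial (W : Submodule R V) := IsSimpleModule.nontrivial R _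
    obtain ⟨⟨x, hx⟩, hne⟩ := exists_ne (0 : (W : Submodule R V))
    exact ⟨x, hx, fun h => hne (Subtype.ext h)⟩
  have hli : LinearIndependent ℂ π := by
    rw [linearIndependent_iff']
    intro t g hg W₀ hW₀
    obtain ⟨x₀, hx₀, hx₀ne⟩ := hnt W₀
    have := congrArg (fun (f : V →ₗ[R] V) => f x₀) hg
    simp only [LinearMap.coe_sum, Finset.sum_apply, LinearMap.smul_apply,
      LinearMap.zero_apply] at this
    rw [Finset.sum_eq_single_of_mem W₀ hW₀ (fun W hW hne => by
      rw [hπ2 W W₀ (Ne.symm hne) x₀ hx₀, smul_zero])] at this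
    rw [hπ1 W₀ x₀ hx₀] at this
    exact (smul_eq_zero.1 this).resolve_right hx₀ne
  haveI : FiniteDimensional ℂ (V →ₗ[R] V) := LinearEquiv.finiteDimensional e.symm
  haveI : Finite s := hli.finite_of_isNoetherian
  haveI : Fintype s := Fintype.ofFinite _
  -- spanning
  have hspan : ⊤ ≤ Submodule.span ℂ (Set.range π) := by
    rintro f -
    have hinv : ∀ W : s, ∀ x ∈ (W : Submodule R V), f x ∈ (W : Submodule R V) :=
      fun W => inv_of_multFree hmf f W (hsimp _ W.2)
    choose c hc using fun W : s =>
      exists_scalar_of_simple (W : Submodule R V) (hsimp _ W.2) (f.restrict (hinv W))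
    have hf : f = ∑ W : s, c W • π W := by
      have hker : ∀ W₀ : s, ∀ x ∈ (W₀ : Submodule R V),
          (f - ∑ W : s, c W • π W) x = 0 := by
        intro W₀ x hx
        have h1 : f x = c W₀ • x := by
          have := hc W₀ ⟨x, hx⟩
          have := congrArg (Subtype.val) this
          simpa using this
        have h2 : (∑ W : s, c W • π W) x = c W₀ • x := by
          simp only [LinearMap.coe_sum, Finset.sum_apply, LinearMap.smul_apply]
          rw [Finset.sum_eq_single_of_mem W₀ (Finset.mem_univ _) (fun W _ hne => by
            rw [hπ2 W W₀ (Ne.symm hne) x hx, smul_zero])]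
          rw [hπ1 W₀ x hx]
        simp [LinearMap.sub_apply, h1, h2]
      have : (⊤ : Submodule R V) ≤ LinearMap.ker (f - ∑ W : s, c W • π W) := by
        rw [← hsup]
        refine sSup_le fun W hW x hx => ?_
        exact LinearMap.mem_ker.2 (hker ⟨W, hW⟩ x hx)
      have hzero : f - ∑ W : s, c W • π W = 0 :=
        LinearMap.ext fun x => LinearMap.mem_ker.1 (this Submodule.mem_top)
      rw [sub_eq_zero] at hzero
      exact hzero
    rw [hf]
    exact Submodule.sum_mem _ fun W _ =>
      Submodule.smul_mem _ _ (Submodule.subset_span (Set.mem_range_self W))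
  let b : Module.Basis s ℂ (V →ₗ[R] V) := Module.Basis.mk hli hspan
  have hcard : Fintype.card s = m := by
    have h1 : Module.finrank ℂ (V →ₗ[R] V) = Fintype.card s :=
      (Module.finrank_eq_card_basis b)
    have h2 : Module.finrank ℂ (V →ₗ[R] V) = m := by
      rw [e.finrank_eq]
      simp [Module.finrank_pi]
    omega
  let eq : Fin m ≃ s := (Fintype.equivFinOfCardEq hcard).symm
  refine ⟨fun k => (eq k : Submodule R V), ?_, ?_, ?_, ?_⟩
  · have : iSupIndep ((↑) : s → Submodule R V) := (sSupIndep_iff s).1 hind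
    exact this.comp eq.injective
  · rw [← hsup, sSup_eq_iSup']
    exact eq.iSup_comp
  · exact fun k => hsimp _ (eq k).2
  · intro k l hkl
    refine ⟨fun φ => hkl ?_⟩
    have : (eq k : Submodule R V) = (eq l : Submodule R V) :=
      hmf _ _ (hsimp _ (eq k).2) (hsimp _ (eq l).2) ⟨φ⟩
    exact eq.injective (Subtype.ext this)

end Abstract3

namespace Johnson

variable {n i : ℕ}

instance : Fintype (JohnsonSet n i) :=
  inferInstanceAs (Fintype {s : Finset (Fin n) // s.card = i})

instance : DecidableEq (JohnsonSet n i) :=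
  inferInstanceAs (DecidableEq {s : Finset (Fin n) // s.card = i})

theorem smul_coe (g : Equiv.Perm (Fin n)) (s : JohnsonSet n i) :
    (g • s).1 = s.1.image g := rfl

/-- helper: a permutation mapping one finset onto another from a membership criterion -/
theorem image_eq_of_mem_iff (g : Equiv.Perm (Fin n)) {s t : Finset (Fin n)}
    (h : ∀ a, a ∈ s ↔ g a ∈ t) : s.image g = t := by
  ext b
  simp only [Finset.mem_image]
  constructor
  · rintro ⟨a, ha, rfl⟩
    exact (h a).1 ha
  · intro hb
    exact ⟨g.symm b, (h _).2 (by simpa using hb), by simp⟩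

/-- A permutation fixing `x` (setwise) and carrying `y` to `y'`. -/
theorem exists_perm_fix (x y y' : Finset (Fin n))
    (h1 : (x ∩ y).card = (x ∩ y').card) (h2 : (y \ x).card = (y' \ x).card) :
    ∃ g : Equiv.Perm (Fin n), x.image g = x ∧ y.image g = y' := by
  classical
  have c1 : Fintype.card {b : {a : Fin n // a ∈ x} // (b : Fin n) ∈ y} =
      Fintype.card {b : {a : Fin n // a ∈ x} // (b : Fin n) ∈ y'} := by
    have e1 : ∀ z : Finset (Fin n), {b : {a : Fin n // a ∈ x} // (b : Fin n) ∈ z} ≃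
        {a : Fin n // a ∈ x ∩ z} := fun z =>
      (Equiv.subtypeSubtypeEquivSubtypeInter _ _).trans
        (Equiv.subtypeEquivRight (fun a => (Finset.mem_inter).symm))
    rw [Fintype.card_congr (e1 y), Fintype.card_congr (e1 y'), Fintype.card_coe,
      Fintype.card_coe, h1]
  have c2 : Fintype.card {b : {a : Fin n // a ∉ x} // (b : Fin n) ∈ y} =
      Fintype.card {b : {a : Fin n // a ∉ x} // (b : Fin n) ∈ y'} := by
    have e2 : ∀ z : Finset (Fin n), {b : {a : Fin n // a ∉ x} // (b : Fin n) ∈ z} ≃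
        {a : Fin n // a ∈ z \ x} := fun z =>
      (Equiv.subtypeSubtypeEquivSubtypeInter _ _).trans
        (Equiv.subtypeEquivRight (fun a => by simp [Finset.mem_sdiff, and_comm]))
    rw [Fintype.card_congr (e2 y), Fintype.card_congr (e2 y'), Fintype.card_coe,
      Fintype.card_coe, h2]
  let τ₁ : Equiv.Perm {a : Fin n // a ∈ x} := (Fintype.equivOfCardEq c1).extendSubtype
  let τ₂ : Equiv.Perm {a : Fin n // a ∉ x} := (Fintype.equivOfCardEq c2).extendSubtype
  refine ⟨Equiv.Perm.subtypeCongr τ₁ τ₂, ?_, ?_⟩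
  · apply image_eq_of_mem_iff
    intro a
    constructor
    · intro ha
      rw [Equiv.Perm.subtypeCongr.left_apply _ _ ha]
      exact (τ₁ ⟨a, ha⟩).2
    · intro ha
      by_contra hna
      rw [Equiv.Perm.subtypeCongr.right_apply _ _ hna] at ha
      exact (τ₂ ⟨a, hna⟩).2 ha
  · apply image_eq_of_mem_iff
    intro a
    by_cases hx : a ∈ x
    · rw [Equiv.Perm.subtypeCongr.left_apply _ _ hx]
      constructor
      · intro hy
        exact (Fintype.equivOfCardEq c1).extendSubtype_mem ⟨a, hx⟩ hy
      · intro hy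
        by_contra hny
        have := Equiv.extendSubtype_apply_of_not_mem (Fintype.equivOfCardEq c1) ⟨a, hx⟩ hny
        rw [this] at hy
        exact ((Fintype.equivOfCardEq c1).toCompl _).2 hy
    · rw [Equiv.Perm.subtypeCongr.right_apply _ _ hx]
      constructor
      · intro hy
        exact (Fintype.equivOfCardEq c2).extendSubtype_mem ⟨a, hx⟩ hy
      · intro hy
        by_contra hny
        have := Equiv.extendSubtype_apply_of_not_mem (Fintype.equivOfCardEq c2) ⟨a, hx⟩ hny
        rw [this] at hy
        exact ((Fintype.equivOfCardEq c2).toCompl _).2 hy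

theorem exists_perm_image (a b : Finset (Fin n)) (h : a.card = b.card) :
    ∃ g : Equiv.Perm (Fin n), a.image g = b := by
  classical
  have hc : Fintype.card {x : Fin n // x ∈ a} = Fintype.card {x : Fin n // x ∈ b} := by
    rw [Fintype.card_coe, Fintype.card_coe, h]
  let e := Fintype.equivOfCardEq hc
  refine ⟨e.extendSubtype, ?_⟩
  apply Finset.eq_of_subset_of_card_le
  · intro c hc'
    simp only [Finset.mem_image] at hc'
    obtain ⟨a', ha', rfl⟩ := hc'
    exact e.extendSubtype_mem a' ha'
  · rw [Finset.card_image_of_injective _ (Equiv.injective _), h]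

/-- Transitivity on pairs with equal intersection size. -/
theorem johnson_trans (x y x' y' : JohnsonSet n i)
    (h : (x.1 ∩ y.1).card = (x'.1 ∩ y'.1).card) :
    ∃ g : Equiv.Perm (Fin n), g • x = x' ∧ g • y = y' := by
  obtain ⟨σ, hσ⟩ := exists_perm_image x.1 x'.1 (by rw [x.2, x'.2])
  have hint : x'.1 ∩ y.1.image σ = (x.1 ∩ y.1).image σ := by
    rw [← hσ, Finset.image_inter _ _ σ.injective]
  have h1 : (x'.1 ∩ y.1.image σ).card = (x'.1 ∩ y'.1).card := by
    rw [hint, Finset.card_image_of_injective _ σ.injective, h]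
  have h2 : (y.1.image σ \ x'.1).card = (y'.1 \ x'.1).card := by
    have e1 := Finset.card_inter_add_card_sdiff (y.1.image σ) x'.1
    have e2 := Finset.card_inter_add_card_sdiff y'.1 x'.1
    rw [Finset.card_image_of_injective _ σ.injective, y.2] at e1
    rw [y'.2] at e2
    have h1' : (y.1.image σ ∩ x'.1).card = (y'.1 ∩ x'.1).card := by
      rw [Finset.inter_comm, Finset.inter_comm y'.1, h1]
    omega
  obtain ⟨τ, hτx, hτy⟩ := exists_perm_fix x'.1 (y.1.image σ) y'.1 h1 h2
  refine ⟨τ * σ, ?_, ?_⟩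
  · apply Subtype.ext
    rw [smul_coe]
    show x.1.image ⇑(τ * σ) = x'.1
    rw [Equiv.Perm.coe_mul, ← Finset.image_image, hσ, hτx]
  · apply Subtype.ext
    rw [smul_coe]
    show y.1.image ⇑(τ * σ) = y'.1
    rw [Equiv.Perm.coe_mul, ← Finset.image_image, hτy]

/-- The intersection size bound. -/
theorem inter_card_le (x y : JohnsonSet n i) :
    (x.1 ∩ y.1).card ≤ i ∧ i - min i (n - i) ≤ (x.1 ∩ y.1).card := by
  have h1 := Finset.card_union_add_card_inter x.1 y.1
  have h2 : (x.1 ∪ y.1).card ≤ n := by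
    have := Finset.card_le_card (Finset.subset_univ (x.1 ∪ y.1))
    simpa using this
  have h3 := Finset.card_le_card (Finset.inter_subset_left (s₁ := x.1) (s₂ := y.1))
  rw [x.2] at h3
  rw [x.2, y.2] at h1
  omega

-- canonical sets
variable (n i) in
def s0 (hi : i ≤ n) : JohnsonSet n i :=
  ⟨(Finset.range i).attachFin (fun m hm => lt_of_lt_of_le (Finset.mem_range.1 hm) hi),
   by rw [Finset.card_attachFin, Finset.card_range]⟩

variable (n i) in
def tk (k : ℕ) (hk : i + k ≤ n) : JohnsonSet n i :=
  ⟨(Finset.Ico k (i + k)).attachFin (fun m hm => lt_of_lt_of_le (Finset.mem_Ico.1 hm).2 hk),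
   by rw [Finset.card_attachFin, Nat.card_Ico]; omega⟩

theorem s0_inter_tk (hi : i ≤ n) (k : ℕ) (hk : i + k ≤ n) :
    ((s0 n i hi).1 ∩ (tk n i k hk).1).card = i - k := by
  have : (s0 n i hi).1 ∩ (tk n i k hk).1 =
      (Finset.Ico k i).attachFin (fun m hm => lt_of_lt_of_le (Finset.mem_Ico.1 hm).2 hi) := by
    ext a
    simp only [Finset.mem_inter, s0, tk, Finset.mem_attachFin, Finset.mem_range, Finset.mem_Ico]
    omega
  rw [this, Finset.card_attachFin, Nat.card_Ico]

end Johnson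

namespace Johnson
variable {n i : ℕ}

local notation "R" => MonoidAlgebra ℂ (Equiv.Perm (Fin n))
local notation "ρ" => Representation.ofMulAction ℂ (Equiv.Perm (Fin n)) (JohnsonSet n i)

noncomputable instance : Module ℂ (JohnsonModule n i) :=
  inferInstanceAs (Module ℂ (Representation.ofMulAction ℂ (Equiv.Perm (Fin n)) (JohnsonSet n i)).asModule)

theorem smul_def (r : R) (v : JohnsonModule n i) :
    r • v = Representation.asAlgebraHom ρ r v := rfl

instance : IsScalarTower ℂ R (JohnsonModule n i) :=
  ⟨fun c r v => by
    show Representation.asAlgebraHom ρ (c • r) v = c • Representation.asAlgebraHom ρ r v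
    rw [map_smul]
    rfl⟩

instance : SMulCommClass ℂ R (JohnsonModule n i) :=
  ⟨fun c r v => by
    show c • Representation.asAlgebraHom ρ r v = Representation.asAlgebraHom ρ r (c • v)
    exact ((Representation.asAlgebraHom ρ r).map_smul c v).symm⟩

instance : FiniteDimensional ℂ (JohnsonModule n i) :=
  Module.Finite.equiv (Representation.asModuleEquiv ρ).symm

example : IsSemisimpleModule R (JohnsonModule n i) := inferInstance

noncomputable def bas (x : JohnsonSet n i) : JohnsonModule n i :=
  show MonoidAlgebra ℂ (JohnsonSet n i) from MonoidAlgebra.single x 1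

def coef (v : JohnsonModule n i) (x : JohnsonSet n i) : ℂ :=
  (show MonoidAlgebra ℂ (JohnsonSet n i) from v).coeff x

theorem coef_add (v w : JohnsonModule n i) (x : JohnsonSet n i) :
    coef (v + w) x = coef v x + coef w x := rfl

theorem coef_csmul (c : ℂ) (v : JohnsonModule n i) (x : JohnsonSet n i) :
    coef (c • v) x = c * coef v x := rfl

theorem single_smul_bas (g : Equiv.Perm (Fin n)) (x : JohnsonSet n i) :
    (MonoidAlgebra.single g (1 : ℂ)) • bas x = bas (g • x) := by
  rw [smul_def, Representation.asAlgebraHom_single_one]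
  show (Representation.ofMulAction ℂ (Equiv.Perm (Fin n)) (JohnsonSet n i)) g
      (MonoidAlgebra.single x 1) = MonoidAlgebra.single (g • x) 1
  rw [Representation.ofMulAction_single]

theorem coef_single_smul (g : Equiv.Perm (Fin n)) (v : JohnsonModule n i) (x : JohnsonSet n i) :
    coef ((MonoidAlgebra.single g (1 : ℂ)) • v) (g • x) = coef v x := by
  rw [smul_def, Representation.asAlgebraHom_single_one]
  show ((Representation.ofMulAction ℂ (Equiv.Perm (Fin n)) (JohnsonSet n i))
      g (show MonoidAlgebra ℂ (JohnsonSet n i) from v)).coeff (g • x) = _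
  rw [Representation.coeff_ofMulAction]
  rw [inv_smul_smul]
  rfl

end Johnson

namespace Johnson
variable {n i : ℕ}

local notation "R" => MonoidAlgebra ℂ (Equiv.Perm (Fin n))
local notation "ρ" => Representation.ofMulAction ℂ (Equiv.Perm (Fin n)) (JohnsonSet n i)

theorem coef_ext {v w : JohnsonModule n i} (h : ∀ z, coef v z = coef w z) : v = w :=
  MonoidAlgebra.coeff_injective (Finsupp.ext h)

theorem coef_zero (z : JohnsonSet n i) : coef (0 : JohnsonModule n i) z = 0 := rfl

theorem coef_sum {α : Type*} (s : Finset α) (F : α → JohnsonModule n i) (z : JohnsonSet n i) :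
    coef (∑ x ∈ s, F x) z = ∑ x ∈ s, coef (F x) z :=
  (congrArg (fun f => f z) (MonoidAlgebra.coeff_sum s (fun x => show MonoidAlgebra ℂ (JohnsonSet n i) from F x))).trans
    (Finsupp.finset_sum_apply s (fun x => (show MonoidAlgebra ℂ (JohnsonSet n i) from F x).coeff) z)

theorem expand (v : JohnsonModule n i) : v = ∑ x : JohnsonSet n i, coef v x • bas x := by
  apply coef_ext
  intro z
  rw [coef_sum]
  simp only [coef_csmul]
  show (show MonoidAlgebra ℂ (JohnsonSet n i) from v).coeff z = _
  simp [bas, coef, MonoidAlgebra.coeff_single, Finsupp.single_apply]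

theorem map_bas_eq (f g : JohnsonModule n i →ₗ[R] JohnsonModule n i)
    (h : ∀ x, f (bas x) = g (bas x)) : f = g := by
  ext v
  conv_lhs => rw [expand v]
  conv_rhs => rw [expand v]
  rw [map_sum, map_sum]
  exact Finset.sum_congr rfl fun x _ => by
    rw [f.map_smul_of_tower, g.map_smul_of_tower, h x]

theorem coef_inv (f : JohnsonModule n i →ₗ[R] JohnsonModule n i) (g : Equiv.Perm (Fin n))
    (x y : JohnsonSet n i) :
    coef (f (bas (g • x))) (g • y) = coef (f (bas x)) y := by
  rw [← single_smul_bas, f.map_smul, coef_single_smul]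

theorem coef_sym (f : JohnsonModule n i →ₗ[R] JohnsonModule n i) (x y : JohnsonSet n i) :
    coef (f (bas x)) y = coef (f (bas y)) x := by
  obtain ⟨g, hgx, hgy⟩ := johnson_trans x y y x (by rw [Finset.inter_comm])
  have h := coef_inv f g y x
  rw [hgy, hgx] at h
  exact h

theorem coef_apply (f : JohnsonModule n i →ₗ[R] JohnsonModule n i) (v : JohnsonModule n i)
    (z : JohnsonSet n i) :
    coef (f v) z = ∑ y, coef v y * coef (f (bas y)) z := by
  conv_lhs => rw [expand v]
  rw [map_sum, coef_sum]
  exact Finset.sum_congr rfl fun y _ => by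
    rw [f.map_smul_of_tower, coef_csmul]

theorem end_comm (f g : JohnsonModule n i →ₗ[R] JohnsonModule n i) : f ∘ₗ g = g ∘ₗ f := by
  apply map_bas_eq
  intro x
  apply coef_ext
  intro z
  show coef (f (g (bas x))) z = coef (g (f (bas x))) z
  calc coef (f (g (bas x))) z
      = coef ((f ∘ₗ g) (bas x)) z := rfl
    _ = coef ((f ∘ₗ g) (bas z)) x := coef_sym _ x z
    _ = coef (f (g (bas z))) x := rfl
    _ = ∑ y, coef (g (bas z)) y * coef (f (bas y)) x := coef_apply f _ x
    _ = ∑ y, coef (f (bas x)) y * coef (g (bas y)) z := by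
        refine Finset.sum_congr rfl fun y _ => ?_
        rw [coef_sym g z y, coef_sym f y x]
        ring
    _ = coef (g (f (bas x))) z := (coef_apply g _ z).symm

end Johnson


namespace Johnson
variable {n i : ℕ}

local notation "R" => MonoidAlgebra ℂ (Equiv.Perm (Fin n))
local notation "ρ" => Representation.ofMulAction ℂ (Equiv.Perm (Fin n)) (JohnsonSet n i)

theorem inter_card_smul (g : Equiv.Perm (Fin n)) (z x : JohnsonSet n i) :
    ((g • z).1 ∩ (g • x).1).card = (z.1 ∩ x.1).card := by
  rw [smul_coe, smul_coe, ← Finset.image_inter _ _ g.injective,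
    Finset.card_image_of_injective _ g.injective]

/-- the set of `j`-neighbours -/
noncomputable def nbr (j : ℕ) (x : JohnsonSet n i) : Finset (JohnsonSet n i) :=
  Finset.univ.filter (fun y : JohnsonSet n i => (y.1 ∩ x.1).card = j)

theorem mem_nbr (j : ℕ) (x y : JohnsonSet n i) :
    y ∈ nbr j x ↔ (y.1 ∩ x.1).card = j := by
  simp [nbr]

theorem nbr_smul (j : ℕ) (g : Equiv.Perm (Fin n)) (x : JohnsonSet n i) :
    nbr j (g • x) = (nbr j x).image (g • ·) := by
  ext z
  simp only [mem_nbr, Finset.mem_image]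
  constructor
  · intro hz
    refine ⟨g⁻¹ • z, ?_, by simp⟩
    show ((g⁻¹ • z).1 ∩ x.1).card = j
    have := inter_card_smul g (g⁻¹ • z) x
    rw [smul_inv_smul] at this
    rw [← this, hz]
  · rintro ⟨y, hy, rfl⟩
    show ((g • y).1 ∩ (g • x).1).card = j
    rw [inter_card_smul, hy]

noncomputable def adjC (j : ℕ) : (MonoidAlgebra ℂ (JohnsonSet n i)) →ₗ[ℂ] (MonoidAlgebra ℂ (JohnsonSet n i)) :=
  (MonoidAlgebra.coeffLinearEquiv ℂ).symm.toLinearMap ∘ₗ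
    (Finsupp.lsum ℂ fun x => ∑ y ∈ nbr j x, Finsupp.lsingle y) ∘ₗ
      (MonoidAlgebra.coeffLinearEquiv ℂ).toLinearMap

theorem adjC_single (j : ℕ) (x : JohnsonSet n i) (c : ℂ) :
    adjC j (MonoidAlgebra.single x c) = ∑ y ∈ nbr j x, MonoidAlgebra.single y c := by
  apply MonoidAlgebra.coeff_injective
  simp [adjC, MonoidAlgebra.coeff_sum, MonoidAlgebra.coeff_single]

theorem adjC_comm_rho (j : ℕ) (g : Equiv.Perm (Fin n)) (v : MonoidAlgebra ℂ (JohnsonSet n i)) :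
    adjC j ((ρ) g v) = (ρ) g (adjC j v) := by
  have : (adjC j (n := n) (i := i)) ∘ₗ ((ρ) g) = ((ρ) g) ∘ₗ adjC j := by
    refine MonoidAlgebra.lhom_ext' fun x => LinearMap.ext fun c => ?_
    simp only [LinearMap.comp_apply, MonoidAlgebra.lsingle_apply]
    rw [Representation.ofMulAction_single, adjC_single, adjC_single, map_sum]
    rw [nbr_smul, Finset.sum_image (fun a _ b _ h => MulAction.injective g h)]
    exact Finset.sum_congr rfl fun y _ => (Representation.ofMulAction_single g y c).symm
  exact congrFun (congrArg (fun (F : _ →ₗ[ℂ] _) => (F : (MonoidAlgebra ℂ (JohnsonSet n i)) → _)) this) v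

noncomputable def Adj (j : ℕ) : JohnsonModule n i →ₗ[R] JohnsonModule n i where
  toFun v := show MonoidAlgebra ℂ (JohnsonSet n i) from adjC j (show MonoidAlgebra ℂ (JohnsonSet n i) from v)
  map_add' v w := (adjC j).map_add v w
  map_smul' r v := by
    revert v
    intro (v : MonoidAlgebra ℂ (JohnsonSet n i))
    show adjC j (Representation.asAlgebraHom ρ r v) = Representation.asAlgebraHom ρ r (adjC j v)
    rw [Representation.asAlgebraHom_def, MonoidAlgebra.lift_apply]
    simp only [Finsupp.sum, LinearMap.coe_sum, Finset.sum_apply, LinearMap.smul_apply,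
      map_sum, map_smul]
    exact Finset.sum_congr rfl fun g _ => by rw [adjC_comm_rho]

theorem coef_Adj_bas (j : ℕ) (x t : JohnsonSet n i) :
    coef (Adj j (bas x)) t = if (t.1 ∩ x.1).card = j then 1 else 0 := by
  show (adjC j (MonoidAlgebra.single x 1)).coeff t = _
  rw [adjC_single, MonoidAlgebra.coeff_sum, Finsupp.finset_sum_apply]
  simp only [MonoidAlgebra.coeff_single, Finsupp.single_apply]
  rw [Finset.sum_ite_eq' (nbr j x) t (fun _ => (1 : ℂ))]
  simp [mem_nbr]

section Phi

variable (hi : i ≤ n)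

include hi

theorem tk_le (k : Fin (min i (n - i) + 1)) : i + (k : ℕ) ≤ n := by
  have hk : (k : ℕ) ≤ min i (n - i) := Nat.lt_succ_iff.mp k.2
  have := Nat.min_le_right i (n - i)
  omega

noncomputable def tkF (k : Fin (min i (n - i) + 1)) : JohnsonSet n i :=
  tk n i (k : ℕ) (tk_le hi k)

theorem s0_inter_tkF (k : Fin (min i (n - i) + 1)) :
    ((s0 n i hi).1 ∩ (tkF hi k).1).card = i - (k : ℕ) :=
  s0_inter_tk hi _ _

noncomputable def Phi :
    (JohnsonModule n i →ₗ[R] JohnsonModule n i) →ₗ[ℂ] (Fin (min i (n - i) + 1) → ℂ) where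
  toFun f := fun k => coef (f (bas (s0 n i hi))) (tkF hi k)
  map_add' f g := by
    funext k
    exact coef_add _ _ _
  map_smul' c f := by
    funext k
    exact coef_csmul _ _ _

theorem Phi_injective : Function.Injective (Phi hi) := by
  rw [injective_iff_map_eq_zero]
  intro f hf
  have key : ∀ x y : JohnsonSet n i, coef (f (bas x)) y = 0 := by
    intro x y
    obtain ⟨h1, h2⟩ := inter_card_le x y
    set c := (x.1 ∩ y.1).card with hc
    have hmin : min i (n - i) ≤ i := Nat.min_le_left _ _
    set k : Fin (min i (n - i) + 1) := ⟨i - c, by omega⟩ with hk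
    have hcc : ((s0 n i hi).1 ∩ (tkF hi k).1).card = (x.1 ∩ y.1).card := by
      rw [s0_inter_tkF]
      show i - (i - c) = c
      omega
    obtain ⟨g, hg1, hg2⟩ := johnson_trans (s0 n i hi) (tkF hi k) x y hcc
    have := coef_inv f g (s0 n i hi) (tkF hi k)
    rw [hg1, hg2] at this
    rw [this]
    exact congrFun hf k
  have : f = 0 := by
    apply map_bas_eq
    intro x
    apply coef_ext
    intro z
    rw [key x z]
    rfl
  exact this

theorem Phi_Adj (k' : Fin (min i (n - i) + 1)) :
    Phi hi (Adj (i - (k' : ℕ))) = Pi.single k' 1 := by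
  funext l
  show coef (Adj (i - (k' : ℕ)) (bas (s0 n i hi))) (tkF hi l) = _
  rw [coef_Adj_bas]
  have hl : ((tkF hi l).1 ∩ (s0 n i hi).1).card = i - (l : ℕ) := by
    rw [Finset.inter_comm]
    exact s0_inter_tkF hi l
  rw [hl]
  have hmin : min i (n - i) ≤ i := Nat.min_le_left _ _
  have hk' : (k' : ℕ) ≤ min i (n - i) := Nat.lt_succ_iff.mp k'.2
  have hll : (l : ℕ) ≤ min i (n - i) := Nat.lt_succ_iff.mp l.2
  by_cases h : l = k'
  · subst h
    simp
  · have : ¬(i - (l : ℕ) = i - (k' : ℕ)) := by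
      intro he
      apply h
      apply Fin.ext
      omega
    rw [if_neg this, Pi.single_apply, if_neg h]

theorem Phi_surjective : Function.Surjective (Phi hi) := by
  intro v
  refine ⟨∑ k : Fin (min i (n - i) + 1), v k • Adj (i - (k : ℕ)), ?_⟩
  rw [map_sum]
  simp only [map_smul, Phi_Adj]
  funext l
  simp only [Finset.sum_apply, Pi.smul_apply, Pi.single_apply, smul_eq_mul, mul_ite,
    mul_one, mul_zero]
  simp

noncomputable def endEquiv :
    (JohnsonModule n i →ₗ[R] JohnsonModule n i) ≃ₗ[ℂ] (Fin (min i (n - i) + 1) → ℂ) :=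
  LinearEquiv.ofBijective (Phi hi) ⟨Phi_injective hi, Phi_surjective hi⟩

end Phi

end Johnson

/-- The permutation representation of `Sₙ` on the `i`-element subsets of
`{1,…,n}` is multiplicity free, with exactly `min(i, n-i) + 1` irreducible constituents. -/
theorem johnson_scheme_multiplicity_free (n i : ℕ) (hi : i ≤ n) :
    IsMultiplicityFree (MonoidAlgebra ℂ (Equiv.Perm (Fin n))) (JohnsonModule n i) ∧
    ∃ W : Fin (min i (n - i) + 1) →
        Submodule (MonoidAlgebra ℂ (Equiv.Perm (Fin n))) (JohnsonModule n i),
      iSupIndep W ∧ (⨆ k, W k) = ⊤ ∧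
      (∀ k, IsSimpleModule (MonoidAlgebra ℂ (Equiv.Perm (Fin n))) (W k)) ∧
      Pairwise fun k l =>
        IsEmpty ((W k) ≃ₗ[MonoidAlgebra ℂ (Equiv.Perm (Fin n))] (W l)) := by
  have hmf : IsMultiplicityFree (MonoidAlgebra ℂ (Equiv.Perm (Fin n))) (JohnsonModule n i) :=
    multFree_of_comm (fun f g => Johnson.end_comm f g)
  exact ⟨hmf, exists_decomp hmf (Johnson.endEquiv hi)⟩
end

section
/- Let V(B(n)) be the complex vector space with basis all subsets of {1,…,n}, graded by cardinality, and let U be the up operator. Then there exists a symmetric Jordan basis of V(B(n)); moreover, for every 0 ≤ k ≤ n/2, the number of symmetric Jordan chains in this basis starting at rank k and ending at rank n−k equals C(n,k) − C(n,k−1), the number of standard Young tableaux of shape (n−k,k). -/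
/-- The up operator on `V(B(n))`, the complex vector space of functions on subsets of
`{1,…,n}` (with subsets as standard basis): `U(X) = Σ_{Y ⊇ X, |Y| = |X|+1} Y`; in terms of
coordinates, `(U v)(Y) = Σ_{X ⊆ Y, |X|+1 = |Y|} v(X)`. -/
noncomputable def upOp (n : ℕ) : (Finset (Fin n) → ℂ) →ₗ[ℂ] (Finset (Fin n) → ℂ) where
  toFun v Y := ∑ X ∈ Finset.univ.filter (fun X => X ⊆ Y ∧ X.card + 1 = Y.card), v X
  map_add' u v := by funext Y; simp [Finset.sum_add_distrib]
  map_smul' c v := by funext Y; simp [Finset.mul_sum]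

/-- A symmetric Jordan chain in `V(B(n))`: a sequence `v₀, …, v_{len-1}` of nonzero homogeneous
vectors (of ranks `start, start+1, …`), each mapped to the next by the up operator, with
`U(v_{len-1}) = 0`, and with starting and ending ranks summing to `n`. -/
structure SJC (n : ℕ) where
  len : ℕ
  len_pos : 0 < len
  start : ℕ
  v : Fin len → (Finset (Fin n) → ℂ)
  nonzero : ∀ j, v j ≠ 0
  homog : ∀ (j : Fin len) (X : Finset (Fin n)), X.card ≠ start + (j : ℕ) → v j X = 0
  chain : ∀ (j : ℕ) (hj : j + 1 < len), upOp n (v ⟨j, by omega⟩) = v ⟨j + 1, hj⟩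
  chain_top : upOp n (v ⟨len - 1, by omega⟩) = 0
  symmetric : start + (start + (len - 1)) = n

namespace SJBaux


variable {n : ℕ}

def pull (Y : Finset (Fin (n+1))) : Finset (Fin n) :=
  Finset.univ.filter (fun x => x.castSucc ∈ Y)

def push0 (X : Finset (Fin n)) : Finset (Fin (n+1)) := X.map Fin.castSuccEmb

def push1 (X : Finset (Fin n)) : Finset (Fin (n+1)) := insert (Fin.last n) (push0 X)

@[simp] lemma mem_pull {Y : Finset (Fin (n+1))} {x : Fin n} :
    x ∈ pull Y ↔ x.castSucc ∈ Y := by simp [pull]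

@[simp] lemma mem_push0 {X : Finset (Fin n)} {y : Fin (n+1)} :
    y ∈ push0 X ↔ ∃ x ∈ X, x.castSucc = y := by
  simp only [push0, Finset.mem_map, Fin.castSuccEmb]; rfl

lemma last_not_mem_push0 (X : Finset (Fin n)) : Fin.last n ∉ push0 X := by
  simp only [mem_push0]
  rintro ⟨x, -, hx⟩
  exact absurd hx (Fin.castSucc_lt_last x).ne

lemma last_mem_push1 (X : Finset (Fin n)) : Fin.last n ∈ push1 X := Finset.mem_insert_self _ _

@[simp] lemma pull_push0 (X : Finset (Fin n)) : pull (push0 X) = X := by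
  ext x
  simp only [mem_pull, mem_push0, Fin.castSucc_inj]
  constructor
  · rintro ⟨y, hy, rfl⟩; exact hy
  · intro h; exact ⟨x, h, rfl⟩

@[simp] lemma pull_push1 (X : Finset (Fin n)) : pull (push1 X) = X := by
  ext x
  simp only [mem_pull, push1, Finset.mem_insert, mem_push0]
  constructor
  · rintro (h | ⟨y, hy, h⟩)
    · exact absurd h (Fin.castSucc_lt_last x).ne
    · rw [Fin.castSucc_inj] at h; exact h ▸ hy
  · intro h; exact Or.inr ⟨x, h, rfl⟩

lemma push0_pull {Y : Finset (Fin (n+1))} (h : Fin.last n ∉ Y) : push0 (pull Y) = Y := by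
  ext y
  simp only [mem_push0, mem_pull]
  constructor
  · rintro ⟨x, hx, rfl⟩; exact hx
  · intro hy
    rcases Fin.eq_castSucc_or_eq_last y with ⟨x, rfl⟩ | rfl
    · exact ⟨x, hy, rfl⟩
    · exact absurd hy h

lemma push1_pull {Y : Finset (Fin (n+1))} (h : Fin.last n ∈ Y) : push1 (pull Y) = Y := by
  ext y
  simp only [push1, Finset.mem_insert, mem_push0, mem_pull]
  constructor
  · rintro (rfl | ⟨x, hx, rfl⟩)
    · exact h
    · exact hx
  · intro hy
    rcases Fin.eq_castSucc_or_eq_last y with ⟨x, rfl⟩ | rfl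
    · exact Or.inr ⟨x, hy, rfl⟩
    · exact Or.inl rfl

@[simp] lemma card_push0 (X : Finset (Fin n)) : (push0 X).card = X.card := Finset.card_map _

@[simp] lemma card_push1 (X : Finset (Fin n)) : (push1 X).card = X.card + 1 := by
  rw [push1, Finset.card_insert_of_notMem (last_not_mem_push0 X), card_push0]

lemma card_pull_of_not_mem {Y : Finset (Fin (n+1))} (h : Fin.last n ∉ Y) :
    (pull Y).card = Y.card := by
  conv_rhs => rw [← push0_pull h, card_push0]

lemma card_pull_of_mem {Y : Finset (Fin (n+1))} (h : Fin.last n ∈ Y) :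
    (pull Y).card + 1 = Y.card := by
  conv_rhs => rw [← push1_pull h, card_push1]

lemma pull_mono {Y Z : Finset (Fin (n+1))} (h : Y ⊆ Z) : pull Y ⊆ pull Z := by
  intro x hx; simp only [mem_pull] at *; exact h hx

lemma push0_mono {X W : Finset (Fin n)} (h : X ⊆ W) : push0 X ⊆ push0 W :=
  Finset.map_subset_map.mpr h

lemma pull_erase_last (Y : Finset (Fin (n+1))) : pull (Y.erase (Fin.last n)) = pull Y := by
  ext x
  simp only [mem_pull, Finset.mem_erase]
  exact ⟨fun h => h.2, fun h => ⟨(Fin.castSucc_lt_last x).ne, h⟩⟩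


noncomputable def io0 : (Finset (Fin n) → ℂ) →ₗ[ℂ] (Finset (Fin (n+1)) → ℂ) where
  toFun a Y := if Fin.last n ∈ Y then 0 else a (pull Y)
  map_add' u v := by funext Y; by_cases h : Fin.last n ∈ Y <;> simp [h]
  map_smul' c v := by funext Y; by_cases h : Fin.last n ∈ Y <;> simp [h]

noncomputable def io1 : (Finset (Fin n) → ℂ) →ₗ[ℂ] (Finset (Fin (n+1)) → ℂ) where
  toFun b Y := if Fin.last n ∈ Y then b (pull Y) else 0
  map_add' u v := by funext Y; by_cases h : Fin.last n ∈ Y <;> simp [h]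
  map_smul' c v := by funext Y; by_cases h : Fin.last n ∈ Y <;> simp [h]

@[simp] lemma io0_push0 (a : Finset (Fin n) → ℂ) (X : Finset (Fin n)) :
    io0 a (push0 X) = a X := by
  simp only [io0, LinearMap.coe_mk, AddHom.coe_mk, if_neg (last_not_mem_push0 X), pull_push0]

@[simp] lemma io0_push1 (a : Finset (Fin n) → ℂ) (X : Finset (Fin n)) :
    io0 a (push1 X) = 0 := by
  simp only [io0, LinearMap.coe_mk, AddHom.coe_mk, if_pos (last_mem_push1 X)]

@[simp] lemma io1_push0 (b : Finset (Fin n) → ℂ) (X : Finset (Fin n)) :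
    io1 b (push0 X) = 0 := by
  simp only [io1, LinearMap.coe_mk, AddHom.coe_mk, if_neg (last_not_mem_push0 X)]

@[simp] lemma io1_push1 (b : Finset (Fin n) → ℂ) (X : Finset (Fin n)) :
    io1 b (push1 X) = b X := by
  simp only [io1, LinearMap.coe_mk, AddHom.coe_mk, if_pos (last_mem_push1 X), pull_push1]

lemma io_decomp (v : Finset (Fin (n+1)) → ℂ) :
    v = io0 (fun X => v (push0 X)) + io1 (fun X => v (push1 X)) := by
  funext Y
  by_cases h : Fin.last n ∈ Y
  · simp [io0, io1, h, push1_pull h]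
  · simp [io0, io1, h, push0_pull h]

lemma io_eq_zero {a b : Finset (Fin n) → ℂ}
    (h : io0 a + io1 b = 0) : a = 0 ∧ b = 0 := by
  constructor
  · funext X
    have := congrFun h (push0 X)
    simpa using this
  · funext X
    have := congrFun h (push1 X)
    simpa using this

lemma upOp_apply (v : Finset (Fin n) → ℂ) (Y : Finset (Fin n)) :
    upOp n v Y = ∑ X ∈ Finset.univ.filter (fun X => X ⊆ Y ∧ X.card + 1 = Y.card), v X := rfl

lemma up_io0 (a : Finset (Fin n) → ℂ) :
    upOp (n+1) (io0 a) = io0 (upOp n a) + io1 a := by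
  funext Y
  by_cases h : Fin.last n ∈ Y
  · -- LHS: only X = Y.erase last contributes
    have hY : 1 ≤ Y.card := Finset.card_pos.mpr ⟨_, h⟩
    have hmem : Y.erase (Fin.last n) ∈
        Finset.univ.filter (fun X => X ⊆ Y ∧ X.card + 1 = Y.card) := by
      simp only [Finset.mem_filter, Finset.mem_univ, true_and]
      exact ⟨Finset.erase_subset _ _, by rw [Finset.card_erase_of_mem h]; omega⟩
    rw [upOp_apply]
    rw [Finset.sum_eq_single_of_mem _ hmem]
    · simp only [io0, io1, Pi.add_apply, LinearMap.coe_mk, AddHom.coe_mk, h, if_pos,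
        if_true]
      simp only [Finset.mem_erase, ne_eq, not_true_eq_false, false_and, if_neg,
        not_false_iff]
      rw [pull_erase_last]
      simp
    · intro X hX hne
      simp only [Finset.mem_filter, Finset.mem_univ, true_and] at hX
      simp only [io0, LinearMap.coe_mk, AddHom.coe_mk]
      by_cases hl : Fin.last n ∈ X
      · rw [if_pos hl]
      · exfalso
        apply hne
        apply Finset.eq_of_subset_of_card_le (Finset.subset_erase.mpr ⟨hX.1, hl⟩)
        rw [Finset.card_erase_of_mem h]
        omega
  · -- last ∉ Y
    rw [upOp_apply]
    have h2 : (io0 (upOp n a) + io1 a) Y = upOp n a (pull Y) := by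
      simp [io0, io1, h]
    rw [h2, upOp_apply]
    apply Finset.sum_nbij' (i := pull) (j := push0)
    · intro X hX
      simp only [Finset.mem_filter, Finset.mem_univ, true_and] at hX ⊢
      have hl : Fin.last n ∉ X := fun hc => h (hX.1 hc)
      exact ⟨pull_mono hX.1, by rw [card_pull_of_not_mem hl, card_pull_of_not_mem h]; exact hX.2⟩
    · intro W hW
      simp only [Finset.mem_filter, Finset.mem_univ, true_and] at hW ⊢
      constructor
      · calc push0 W ⊆ push0 (pull Y) := push0_mono hW.1
          _ = Y := push0_pull h
      · rw [card_push0, ← card_pull_of_not_mem h]; exact hW.2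
    · intro X hX
      simp only [Finset.mem_filter, Finset.mem_univ, true_and] at hX
      exact push0_pull (fun hc => h (hX.1 hc))
    · intro W _; exact pull_push0 W
    · intro X hX
      simp only [Finset.mem_filter, Finset.mem_univ, true_and] at hX
      simp only [io0, LinearMap.coe_mk, AddHom.coe_mk,
        if_neg (show Fin.last n ∉ X from fun hc => h (hX.1 hc))]


lemma push1_mono {X W : Finset (Fin n)} (h : X ⊆ W) : push1 X ⊆ push1 W :=
  Finset.insert_subset_insert _ (push0_mono h)

lemma up_io1 (b : Finset (Fin n) → ℂ) :
    upOp (n+1) (io1 b) = io1 (upOp n b) := by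
  funext Y
  by_cases h : Fin.last n ∈ Y
  · have h2 : io1 (upOp n b) Y = upOp n b (pull Y) := by
      simp only [io1, LinearMap.coe_mk, AddHom.coe_mk, if_pos h]
    rw [upOp_apply, h2, upOp_apply]
    calc ∑ X ∈ Finset.univ.filter (fun X => X ⊆ Y ∧ X.card + 1 = Y.card), io1 b X
        = ∑ X ∈ Finset.univ.filter (fun X => X ⊆ Y ∧ X.card + 1 = Y.card),
            (if Fin.last n ∈ X then b (pull X) else 0) := rfl
      _ = ∑ X ∈ (Finset.univ.filter (fun X => X ⊆ Y ∧ X.card + 1 = Y.card)).filter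
            (fun X => Fin.last n ∈ X), b (pull X) := (Finset.sum_filter _ _).symm
      _ = ∑ W ∈ Finset.univ.filter (fun W => W ⊆ pull Y ∧ W.card + 1 = (pull Y).card), b W := by
          apply Finset.sum_nbij' (i := pull) (j := push1)
          · intro X hX
            simp only [Finset.mem_filter, Finset.mem_univ, true_and] at hX ⊢
            obtain ⟨⟨hsub, hcard⟩, hl⟩ := hX
            refine ⟨pull_mono hsub, ?_⟩
            have c1 := card_pull_of_mem hl
            have c2 := card_pull_of_mem h
            omega
          · intro W hW
            simp only [Finset.mem_filter, Finset.mem_univ, true_and] at hW ⊢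
            obtain ⟨hsub, hcard⟩ := hW
            refine ⟨⟨?_, ?_⟩, last_mem_push1 W⟩
            · calc push1 W ⊆ push1 (pull Y) := push1_mono hsub
                _ = Y := push1_pull h
            · have c2 := card_pull_of_mem h
              rw [card_push1]
              omega
          · intro X hX
            simp only [Finset.mem_filter, Finset.mem_univ, true_and] at hX
            exact push1_pull hX.2
          · intro W _; exact pull_push1 W
          · intro X hX
            rfl
  · rw [upOp_apply]
    have h2 : io1 (upOp n b) Y = 0 := by
      simp only [io1, LinearMap.coe_mk, AddHom.coe_mk, if_neg h]
    rw [h2]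
    apply Finset.sum_eq_zero
    intro X hX
    simp only [Finset.mem_filter, Finset.mem_univ, true_and] at hX
    simp only [io1, LinearMap.coe_mk, AddHom.coe_mk,
      if_neg (show Fin.last n ∉ X from fun hc => h (hX.1 hc))]


lemma io0_homog {a : Finset (Fin n) → ℂ} {r : ℕ} (ha : ∀ X, X.card ≠ r → a X = 0)
    (Y : Finset (Fin (n+1))) (hY : Y.card ≠ r) : io0 a Y = 0 := by
  simp only [io0, LinearMap.coe_mk, AddHom.coe_mk]
  split_ifs with h
  · rfl
  · exact ha _ (by rw [card_pull_of_not_mem h]; exact hY)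

lemma io1_homog {b : Finset (Fin n) → ℂ} {r : ℕ} (hb : ∀ X, X.card ≠ r → b X = 0)
    (Y : Finset (Fin (n+1))) (hY : Y.card ≠ r + 1) : io1 b Y = 0 := by
  simp only [io1, LinearMap.coe_mk, AddHom.coe_mk]
  split_ifs with h
  · refine hb _ fun hc => hY ?_
    rw [← card_pull_of_mem h, hc]
  · rfl

lemma io_ne_zero_left {a b : Finset (Fin n) → ℂ} (ha : a ≠ 0) : io0 a + io1 b ≠ 0 :=
  fun h => ha (io_eq_zero h).1

lemma io_ne_zero_right {a b : Finset (Fin n) → ℂ} (hb : b ≠ 0) : io0 a + io1 b ≠ 0 :=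
  fun h => hb (io_eq_zero h).2

/-- The chain of an `SJC`, extended by zero to all of `ℕ`. -/
noncomputable def ext (c : SJC n) (j : ℕ) : Finset (Fin n) → ℂ :=
  if h : j < c.len then c.v ⟨j, h⟩ else 0

lemma ext_of_lt (c : SJC n) {j : ℕ} (h : j < c.len) : ext c j = c.v ⟨j, h⟩ := dif_pos h

lemma ext_of_ge (c : SJC n) {j : ℕ} (h : c.len ≤ j) : ext c j = 0 := dif_neg (by omega)

lemma ext_ne_zero (c : SJC n) {j : ℕ} (h : j < c.len) : ext c j ≠ 0 := by
  rw [ext_of_lt c h]; exact c.nonzero _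

lemma ext_chain (c : SJC n) (j : ℕ) : upOp n (ext c j) = ext c (j + 1) := by
  by_cases h : j + 1 < c.len
  · rw [ext_of_lt c (by omega : j < c.len), ext_of_lt c h]
    exact c.chain j h
  · rw [ext_of_ge c (show c.len ≤ j + 1 by omega)]
    by_cases h2 : j < c.len
    · have hj : j = c.len - 1 := by omega
      rw [ext_of_lt c h2]
      have := c.chain_top
      have he : (⟨j, h2⟩ : Fin c.len) = ⟨c.len - 1, by omega⟩ := by
        simp [hj]
      rw [he]
      exact this
    · rw [ext_of_ge c (show c.len ≤ j by omega)]
      exact map_zero _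

lemma ext_homog (c : SJC n) (j : ℕ) (X : Finset (Fin n)) (hX : X.card ≠ c.start + j) :
    ext c j X = 0 := by
  by_cases h : j < c.len
  · rw [ext_of_lt c h]
    exact c.homog ⟨j, h⟩ X hX
  · rw [ext_of_ge c (by omega)]
    rfl

/-- `j`-th vector of the "long" chain built from `c`. -/
noncomputable def wA (c : SJC n) (j : ℕ) : Finset (Fin (n+1)) → ℂ :=
  io0 (ext c j) + io1 ((j : ℂ) • ext c (j - 1))

/-- `j`-th vector of the "short" chain built from `c`. -/
noncomputable def uB (c : SJC n) (j : ℕ) : Finset (Fin (n+1)) → ℂ :=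
  io0 (ext c (j + 1)) + io1 ((((j : ℕ) + 1 : ℂ) - (c.len : ℂ)) • ext c j)

lemma wA_step (c : SJC n) (j : ℕ) : upOp (n+1) (wA c j) = wA c (j + 1) := by
  rw [wA, map_add, up_io0, up_io1, map_smul, ext_chain, ext_chain]
  rw [wA]
  have : (j : ℂ) • ext c (j - 1 + 1) = (j : ℂ) • ext c j := by
    rcases j with _ | j
    · simp
    · norm_num
  rw [this]
  have h2 : ((j + 1 : ℕ) : ℂ) • ext c (j + 1 - 1) = ext c j + (j : ℂ) • ext c j := by
    simp only [Nat.add_sub_cancel, Nat.cast_add, Nat.cast_one]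
    rw [add_smul, one_smul, add_comm]
  rw [h2, map_add]
  abel

lemma uB_step (c : SJC n) (j : ℕ) : upOp (n+1) (uB c j) = uB c (j + 1) := by
  rw [uB, map_add, up_io0, up_io1, map_smul, ext_chain, ext_chain]
  rw [uB]
  have h2 : (((j + 1 : ℕ) + 1 : ℂ) - (c.len : ℂ)) • ext c (j + 1)
      = ext c (j + 1) + (((j : ℕ) + 1 : ℂ) - (c.len : ℂ)) • ext c (j + 1) := by
    rw [show (((j + 1 : ℕ) + 1 : ℂ) - (c.len : ℂ))
        = 1 + (((j : ℕ) + 1 : ℂ) - (c.len : ℂ)) by push_cast; ring]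
    rw [add_smul, one_smul, add_comm]
  rw [h2, map_add]
  abel

lemma wA_homog (c : SJC n) (j : ℕ) (Y : Finset (Fin (n+1))) (hY : Y.card ≠ c.start + j) :
    wA c j Y = 0 := by
  rw [wA, Pi.add_apply]
  rw [io0_homog (ext_homog c j) Y hY]
  rcases j with _ | j
  · norm_num
  · rw [io1_homog (r := c.start + j) ?_ Y (by omega), add_zero]
    intro X hX
    simp only [Nat.add_sub_cancel, Pi.smul_apply, smul_eq_mul]
    rw [ext_homog c j X hX, mul_zero]

lemma uB_homog (c : SJC n) (j : ℕ) (Y : Finset (Fin (n+1))) (hY : Y.card ≠ c.start + 1 + j) :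
    uB c j Y = 0 := by
  rw [uB, Pi.add_apply]
  rw [io0_homog (ext_homog c (j+1)) Y (by omega)]
  rw [io1_homog (r := c.start + j) ?_ Y (by omega), add_zero]
  intro X hX
  simp only [Pi.smul_apply, smul_eq_mul]
  rw [ext_homog c j X hX, mul_zero]


lemma wA_eq_zero (c : SJC n) {j : ℕ} (h : c.len + 1 ≤ j) : wA c j = 0 := by
  rw [wA, ext_of_ge c (show c.len ≤ j by omega), ext_of_ge c (show c.len ≤ j - 1 by omega),
    map_zero, smul_zero, map_zero, add_zero]

lemma uB_eq_zero (c : SJC n) {j : ℕ} (h : c.len - 1 ≤ j) : uB c j = 0 := by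
  by_cases hl : c.len ≤ j
  · rw [uB, ext_of_ge c (show c.len ≤ j + 1 by omega), ext_of_ge c hl, map_zero, smul_zero,
      map_zero, add_zero]
  · have hj : j = c.len - 1 := by omega
    have h1 : 1 ≤ c.len := c.len_pos
    subst hj
    rw [uB, ext_of_ge c (show c.len ≤ c.len - 1 + 1 by omega), map_zero, zero_add]
    rw [show (((c.len - 1 : ℕ) : ℂ) + 1 - (c.len : ℂ)) = 0 from by
      rw [← Nat.cast_add_one, show c.len - 1 + 1 = c.len by omega]; ring]
    rw [zero_smul, map_zero]

/-- The longer symmetric Jordan chain in `B(n+1)` built from a chain in `B(n)`. -/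
noncomputable def chainA (c : SJC n) : SJC (n+1) where
  len := c.len + 1
  len_pos := by omega
  start := c.start
  v := fun j => wA c j
  nonzero := by
    intro j
    rcases lt_or_ge (j : ℕ) c.len with h | h
    · exact io_ne_zero_left (ext_ne_zero c h)
    · have hj : (j : ℕ) = c.len := by have := j.isLt; omega
      have hp := c.len_pos
      show wA c (j : ℕ) ≠ 0
      rw [hj, wA]
      exact io_ne_zero_right (smul_ne_zero (Nat.cast_ne_zero.mpr c.len_pos.ne')
        (ext_ne_zero c (by omega)))
  homog := fun j X hX => wA_homog c j X hX
  chain := fun j _ => wA_step c j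
  chain_top := by
    show upOp (n+1) (wA c (c.len + 1 - 1)) = 0
    rw [Nat.add_sub_cancel, wA_step]
    exact wA_eq_zero c le_rfl
  symmetric := by
    have := c.symmetric
    have := c.len_pos
    omega

/-- The shorter symmetric Jordan chain in `B(n+1)` built from a chain in `B(n)` of
length at least two. -/
noncomputable def chainB (c : SJC n) (h2 : 2 ≤ c.len) : SJC (n+1) where
  len := c.len - 1
  len_pos := by omega
  start := c.start + 1
  v := fun j => uB c j
  nonzero := fun j => io_ne_zero_left (ext_ne_zero c (by have := j.isLt; omega))
  homog := fun j X hX => uB_homog c j X hX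
  chain := fun j _ => uB_step c j
  chain_top := by
    show upOp (n+1) (uB c (c.len - 1 - 1)) = 0
    rw [show c.len - 1 - 1 = c.len - 2 by omega, uB_step,
      show c.len - 2 + 1 = c.len - 1 by omega]
    exact uB_eq_zero c le_rfl
  symmetric := by
    have := c.symmetric
    omega

lemma key_identity (c : SJC n) (j : ℕ) :
    wA c (j + 1) - uB c j = (c.len : ℂ) • io1 (ext c j) := by
  have hc : (((j + 1 : ℕ) : ℂ)) • ext c j - ((j : ℂ) + 1 - (c.len : ℂ)) • ext c j
      = (c.len : ℂ) • ext c j := by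
    rw [← sub_smul]
    congr 1
    push_cast
    ring
  rw [wA, uB, Nat.add_sub_cancel, ← map_smul, ← hc, map_sub]
  abel

lemma io0_eq (c : SJC n) (j : ℕ) :
    io0 (ext c j) = wA c j - (j : ℂ) • io1 (ext c (j - 1)) := by
  rw [wA, map_smul]
  abel

lemma chain_mem_span (c : SJC n) (S : Submodule ℂ (Finset (Fin (n+1)) → ℂ))
    (hA : ∀ j, wA c j ∈ S) (hU : ∀ j, uB c j ∈ S) :
    (∀ j, io1 (ext c j) ∈ S) ∧ ∀ j, io0 (ext c j) ∈ S := by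
  have h1 : ∀ j, io1 (ext c j) ∈ S := by
    intro j
    have hl : ((c.len : ℂ)) ≠ 0 := Nat.cast_ne_zero.mpr c.len_pos.ne'
    have h : io1 (ext c j) = (c.len : ℂ)⁻¹ • (wA c (j + 1) - uB c j) := by
      rw [key_identity, smul_smul, inv_mul_cancel₀ hl, one_smul]
    rw [h]
    exact Submodule.smul_mem _ _ (Submodule.sub_mem _ (hA _) (hU _))
  refine ⟨h1, fun j => ?_⟩
  rw [io0_eq]
  exact Submodule.sub_mem _ (hA _) (Submodule.smul_mem _ _ (h1 _))

lemma finrank_V (m : ℕ) : Module.finrank ℂ (Finset (Fin m) → ℂ) = 2 ^ m := by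
  rw [Module.finrank_fintype_fun_eq_card, Fintype.card_finset, Fintype.card_fin]

lemma len_eq (c : SJC n) : c.len = n + 1 - 2 * c.start := by
  have := c.symmetric
  have := c.len_pos
  omega

lemma start_le (c : SJC n) : 2 * c.start ≤ n := by
  have := c.symmetric
  have := c.len_pos
  omega


theorem step (ι : Type) [Fintype ι] (c : ι → SJC n)
    (B : Module.Basis ((t : ι) × Fin (c t).len) ℂ (Finset (Fin n) → ℂ))
    (hB : ∀ t j, B ⟨t, j⟩ = (c t).v j) :
    ∃ (ι' : Type) (_ : Fintype ι') (c' : ι' → SJC (n+1))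
      (B' : Module.Basis ((t : ι') × Fin (c' t).len) ℂ (Finset (Fin (n+1)) → ℂ)),
      (∀ t j, B' ⟨t, j⟩ = (c' t).v j) ∧
      (∀ k : ℕ, k ≠ 0 → 2 * k ≤ n + 1 →
        Fintype.card {t : ι' // (c' t).start = k}
          = Fintype.card {t : ι // (c t).start = k}
            + Fintype.card {t : ι // (c t).start = k - 1}) ∧
      Fintype.card {t : ι' // (c' t).start = 0}
        = Fintype.card {t : ι // (c t).start = 0} := by
  classical
  let Sub := {s : ι // 2 ≤ (c s).len}
  let ι' : Type := ι ⊕ Sub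
  let c' : ι' → SJC (n+1) := Sum.elim (fun t => chainA (c t)) (fun s => chainB (c s.1) s.2)
  let g : ((t : ι') × Fin (c' t).len) → (Finset (Fin (n+1)) → ℂ) := fun p => (c' p.1).v p.2
  set S := Submodule.span ℂ (Set.range g) with hS
  have hgA : ∀ (t : ι) (j : ℕ), wA (c t) j ∈ S := by
    intro t j
    rcases lt_or_ge j ((c t).len + 1) with h | h
    · exact Submodule.subset_span ⟨⟨Sum.inl t, ⟨j, h⟩⟩, rfl⟩
    · rw [wA_eq_zero (c t) h]; exact S.zero_mem
  have hgB : ∀ (t : ι) (j : ℕ), uB (c t) j ∈ S := by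
    intro t j
    rcases lt_or_ge j ((c t).len - 1) with h | h
    · have h2 : 2 ≤ (c t).len := by omega
      exact Submodule.subset_span ⟨⟨Sum.inr ⟨t, h2⟩, ⟨j, h⟩⟩, rfl⟩
    · rw [uB_eq_zero (c t) h]; exact S.zero_mem
  have hmem : ∀ a : Finset (Fin n) → ℂ, io0 a ∈ S ∧ io1 a ∈ S := by
    intro a
    have ha : a ∈ Submodule.span ℂ (Set.range ⇑B) := by rw [B.span_eq]; trivial
    constructor
    · have h1 : io0 a ∈ Submodule.map (io0 (n := n)) (Submodule.span ℂ (Set.range ⇑B)) :=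
        Submodule.mem_map_of_mem ha
      rw [Submodule.map_span] at h1
      refine Submodule.span_le.mpr ?_ h1
      rintro _ ⟨_, ⟨⟨t, j⟩, rfl⟩, rfl⟩
      have he : B ⟨t, j⟩ = ext (c t) (j : ℕ) := by
        rw [hB t j, ext_of_lt (c t) j.isLt]
      rw [he]
      exact (chain_mem_span (c t) S (hgA t) (hgB t)).2 j
    · have h1 : io1 a ∈ Submodule.map (io1 (n := n)) (Submodule.span ℂ (Set.range ⇑B)) :=
        Submodule.mem_map_of_mem ha
      rw [Submodule.map_span] at h1
      refine Submodule.span_le.mpr ?_ h1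
      rintro _ ⟨_, ⟨⟨t, j⟩, rfl⟩, rfl⟩
      have he : B ⟨t, j⟩ = ext (c t) (j : ℕ) := by
        rw [hB t j, ext_of_lt (c t) j.isLt]
      rw [he]
      exact (chain_mem_span (c t) S (hgA t) (hgB t)).1 j
  have hspan : ⊤ ≤ S := by
    intro v _
    rw [io_decomp v]
    exact S.add_mem (hmem _).1 (hmem _).2
  have hsumlen : ∑ t : ι, (c t).len = 2 ^ n := by
    have hI : Fintype.card ((t : ι) × Fin (c t).len) = 2 ^ n := by
      rw [← finrank_V n, Module.finrank_eq_card_basis B]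
    rw [← hI, Fintype.card_sigma]
    simp
  have hcard : Fintype.card ((t : ι') × Fin (c' t).len)
      = Module.finrank ℂ (Finset (Fin (n+1)) → ℂ) := by
    rw [finrank_V (n+1), Fintype.card_sigma, Fintype.sum_sum_type]
    have hA : ∑ t : ι, Fintype.card (Fin ((c' (Sum.inl t)).len)) = ∑ t : ι, ((c t).len + 1) := by
      simp [c', chainA]
      exact Finset.sum_congr rfl fun t _ => (Fintype.card_congr' rfl).trans (Fintype.card_fin _)
    have hsub : ∑ s : Sub, Fintype.card (Fin ((c' (Sum.inr s)).len))
        = ∑ t ∈ Finset.univ.filter (fun t => 2 ≤ (c t).len), ((c t).len - 1) := by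
      rw [Finset.sum_subtype (p := fun t => 2 ≤ (c t).len)
        (Finset.univ.filter (fun t => 2 ≤ (c t).len))
        (by intro x; simp) (fun t => (c t).len - 1)]
      exact Finset.sum_congr rfl (fun s _ => Fintype.card_fin _)
    have hBsum : ∑ s : Sub, Fintype.card (Fin ((c' (Sum.inr s)).len))
        = ∑ t : ι, ((c t).len - 1) := by
      rw [hsub]
      apply Finset.sum_subset (Finset.filter_subset _ _)
      intro t _ ht
      simp only [Finset.mem_filter, Finset.mem_univ, true_and, not_le] at ht
      omega
    rw [hA, hBsum, ← Finset.sum_add_distrib]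
    have : ∀ t : ι, (c t).len + 1 + ((c t).len - 1) = 2 * (c t).len := by
      intro t
      have := (c t).len_pos
      omega
    rw [Finset.sum_congr rfl (fun t _ => this t), ← Finset.mul_sum, hsumlen]
    ring
  let B' : Module.Basis ((t : ι') × Fin (c' t).len) ℂ (Finset (Fin (n+1)) → ℂ) :=
    basisOfTopLeSpanOfCardEqFinrank g hspan hcard
  refine ⟨ι', inferInstance, c', B', ?_, ?_, ?_⟩
  · intro t j
    have : ⇑B' = g := coe_basisOfTopLeSpanOfCardEqFinrank g hspan hcard
    rw [this]
  · intro k hk0 hk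
    have e1 : {t : ι' // (c' t).start = k}
        ≃ ({t : ι // (c' (Sum.inl t)).start = k} ⊕ {s : Sub // (c' (Sum.inr s)).start = k}) :=
      Equiv.subtypeSum
    have hA2 : Fintype.card {t : ι // (c' (Sum.inl t)).start = k}
        = Fintype.card {t : ι // (c t).start = k} :=
      Fintype.card_congr (Equiv.subtypeEquivRight fun t => Iff.rfl)
    rw [Fintype.card_congr e1, Fintype.card_sum, hA2]
    congr 1
    have e2 : {s : Sub // (c' (Sum.inr s)).start = k} ≃ {t : ι // (c t).start = k - 1} := by
        refine ⟨fun s => ⟨s.1.1, ?_⟩, fun t => ⟨⟨t.1, ?_⟩, ?_⟩, ?_, ?_⟩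
        · have h2 := s.2
          have : (c' (Sum.inr s.1)).start = (c s.1.1).start + 1 := rfl
          omega
        · have hl := len_eq (c t.1)
          have h2 := t.2
          omega
        · show (c t.1).start + 1 = k
          have h2 := t.2
          omega
        · intro s
          apply Subtype.ext
          apply Subtype.ext
          rfl
        · intro t
          rfl
    exact Fintype.card_congr e2
  · have e1 : {t : ι' // (c' t).start = 0}
        ≃ ({t : ι // (c' (Sum.inl t)).start = 0} ⊕ {s : Sub // (c' (Sum.inr s)).start = 0}) :=
      Equiv.subtypeSum
    haveI : IsEmpty {s : Sub // (c' (Sum.inr s)).start = 0} := by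
      refine ⟨fun s => ?_⟩
      have h2 := s.2
      have : (c' (Sum.inr s.1)).start = (c s.1.1).start + 1 := rfl
      omega
    have hz : Fintype.card {s : Sub // (c' (Sum.inr s)).start = 0} = 0 := Fintype.card_eq_zero
    rw [Fintype.card_congr e1, Fintype.card_sum, hz, add_zero]
    exact Fintype.card_congr (Equiv.subtypeEquivRight fun t => Iff.rfl)


noncomputable def baseChain : SJC 0 where
  len := 1
  len_pos := one_pos
  start := 0
  v := fun _ _ => 1
  nonzero := fun _ h => one_ne_zero (congrFun h ∅)
  homog := fun j X hX => absurd (Finset.card_eq_zero.mpr (Finset.eq_empty_of_isEmpty X))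
    (by simpa using hX)
  chain := fun j hj => absurd hj (by omega)
  chain_top := by
    funext Y
    rw [upOp_apply, Finset.filter_false_of_mem, Finset.sum_empty]
    · rfl
    · intro X _ hc
      have h1 : X.card = 0 := Finset.card_eq_zero.mpr (Finset.eq_empty_of_isEmpty X)
      have h2 : Y.card = 0 := Finset.card_eq_zero.mpr (Finset.eq_empty_of_isEmpty Y)
      omega
  symmetric := rfl

theorem aux : ∀ n : ℕ, ∃ (ι : Type) (_ : Fintype ι) (c : ι → SJC n)
    (B : Module.Basis ((t : ι) × Fin (c t).len) ℂ (Finset (Fin n) → ℂ)),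
    (∀ t j, B ⟨t, j⟩ = (c t).v j) ∧
    ∀ k : ℕ, 2 * k ≤ n →
      (Fintype.card {t : ι // (c t).start = k} : ℤ)
        = (n.choose k : ℤ) - if k = 0 then 0 else (n.choose (k - 1) : ℤ) := by
  intro n
  induction n with
  | zero =>
    let c : PUnit.{1} → SJC 0 := fun _ => baseChain
    let g : ((t : PUnit.{1}) × Fin (c t).len) → (Finset (Fin 0) → ℂ) := fun p => (c p.1).v p.2
    have hspan : ⊤ ≤ Submodule.span ℂ (Set.range g) := by
      intro v _
      have hv : v = v ∅ • g ⟨PUnit.unit, ⟨0, baseChain.len_pos⟩⟩ := by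
        funext X
        have hX : X = ∅ := Finset.eq_empty_of_isEmpty X
        subst hX
        simp [g, c, baseChain]
      rw [hv]
      exact Submodule.smul_mem _ _ (Submodule.subset_span ⟨_, rfl⟩)
    have hcard : Fintype.card ((t : PUnit.{1}) × Fin (c t).len)
        = Module.finrank ℂ (Finset (Fin 0) → ℂ) := by
      rw [finrank_V 0, Fintype.card_sigma]
      simp [c, baseChain]
      exact (Fintype.card_congr' rfl).trans (Fintype.card_fin 1)
    refine ⟨PUnit.{1}, inferInstance, c, basisOfTopLeSpanOfCardEqFinrank g hspan hcard, ?_, ?_⟩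
    · intro t j
      have h : ⇑(basisOfTopLeSpanOfCardEqFinrank g hspan hcard) = g :=
        coe_basisOfTopLeSpanOfCardEqFinrank g hspan hcard
      rw [h]
    · intro k hk
      have hk0 : k = 0 := by omega
      subst hk0
      have : Fintype.card {t : PUnit.{1} // (c t).start = 0} = 1 := by
        rw [Fintype.card_eq_one_iff]
        exact ⟨⟨PUnit.unit, rfl⟩, fun t => Subtype.ext rfl⟩
      rw [this]
      simp
  | succ n ih =>
    obtain ⟨ι, fι, c, B, hB, hcount⟩ := ih
    obtain ⟨ι', fι', c', B', hB', hcnt, hcnt0⟩ := @step n ι fι c B hB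
    refine ⟨ι', fι', c', B', hB', ?_⟩
    have hzero : ∀ m : ℕ, n < 2 * m →
        @Fintype.card {t : ι // (c t).start = m}
          (@Subtype.fintype ι _ (fun a => instDecidableEqNat (c a).start m) fι) = 0 := by
      intro m hm
      haveI : IsEmpty {t : ι // (c t).start = m} :=
        ⟨fun t => by have h1 := start_le (c t.1); have h2 := t.2; omega⟩
      exact @Fintype.card_eq_zero _ _ _
    intro k hk
    rcases Nat.eq_zero_or_pos k with rfl | hkpos
    · rw [hcnt0]
      have h0 := hcount 0 (by omega)
      norm_num at h0 ⊢
      exact h0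
    · obtain ⟨k', rfl⟩ : ∃ k', k = k' + 1 := ⟨k - 1, by omega⟩
      rw [hcnt (k' + 1) (by omega) hk]
      push_cast
      have h2 := hcount k' (by omega)
      have e1 : (n + 1).choose (k' + 1) = n.choose k' + n.choose (k' + 1) :=
        Nat.choose_succ_succ' n k'
      rcases le_or_gt (2 * (k' + 1)) n with hA | hA
      · have h1 := hcount (k' + 1) hA
        rw [if_neg (show ¬(k' + 1 = 0) by omega)] at h1
        simp only [Nat.add_sub_cancel] at h1
        rcases Nat.eq_zero_or_pos k' with rfl | hk'
        · simp only [if_pos rfl] at h2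
          norm_num at h1 h2 e1 ⊢
          omega
        · obtain ⟨k'', rfl⟩ : ∃ k'', k' = k'' + 1 := ⟨k' - 1, by omega⟩
          rw [if_neg (show ¬(k'' + 1 = 0) by omega)] at h2
          simp only [Nat.add_sub_cancel] at h2
          have e2 : (n + 1).choose (k'' + 1) = n.choose k'' + n.choose (k'' + 1) :=
            Nat.choose_succ_succ' n k''
          omega
      · -- here 2 * (k' + 1) = n + 1
        have hz := hzero (k' + 1) (by omega)
        have e3 : n.choose k' = n.choose (k' + 1) := by
          have h4 := Nat.choose_symm (show k' + 1 ≤ n by omega)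
          rwa [show n - (k' + 1) = k' by omega] at h4
        rcases Nat.eq_zero_or_pos k' with rfl | hk'
        · simp only [if_pos rfl] at h2
          norm_num at h2 e1 e3 hz ⊢
          omega
        · obtain ⟨k'', rfl⟩ : ∃ k'', k' = k'' + 1 := ⟨k' - 1, by omega⟩
          rw [if_neg (show ¬(k'' + 1 = 0) by omega)] at h2
          simp only [Nat.add_sub_cancel] at h2
          have e2 : (n + 1).choose (k'' + 1) = n.choose k'' + n.choose (k'' + 1) :=
            Nat.choose_succ_succ' n k''
          omega

end SJBaux

/-- `V(B(n))` has a symmetric Jordan basis in which, for each `0 ≤ k ≤ n/2`,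
the number of chains starting at rank `k` (and ending at rank `n-k`) is `C(n,k) - C(n,k-1)`. -/
theorem symmetric_jordan_basis_exists (n : ℕ) :
    ∃ (m : ℕ) (c : Fin m → SJC n)
      (B : Module.Basis ((t : Fin m) × Fin (c t).len) ℂ (Finset (Fin n) → ℂ)),
      (∀ t j, B ⟨t, j⟩ = (c t).v j) ∧
      ∀ k : ℕ, 2 * k ≤ n →
        (((Finset.univ.filter fun t => (c t).start = k).card : ℤ) =
          (n.choose k : ℤ) - if k = 0 then 0 else (n.choose (k - 1) : ℤ)) := by
  obtain ⟨ι, fι, c, B, hB, hcount⟩ := SJBaux.aux n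
  haveI := fι
  let e : Fin (Fintype.card ι) ≃ ι := (Fintype.equivFin ι).symm
  refine ⟨Fintype.card ι, fun t => c (e t),
    B.reindex (Equiv.sigmaCongrLeft (β := fun t => Fin (c t).len) e).symm, ?_, ?_⟩
  · intro t j
    rw [Module.Basis.reindex_apply, Equiv.symm_symm]
    rw [show (Equiv.sigmaCongrLeft (β := fun t => Fin (c t).len) e) ⟨t, j⟩ = ⟨e t, j⟩ from rfl]
    exact hB (e t) j
  · intro k hk
    have h2 := hcount k hk
    rw [← h2]
    norm_cast
    have h3 : (Finset.univ.filter fun t : Fin (Fintype.card ι) => (c (e t)).start = k).card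
        = Fintype.card {t : Fin (Fintype.card ι) // (c (e t)).start = k} :=
      (Fintype.card_subtype _).symm
    rw [h3, Fintype.card_congr (e.subtypeEquiv fun a => Iff.rfl :
      _ ≃ {t : ι // (c t).start = k})]
    congr 1
    exact Subsingleton.elim _ _
end
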